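/- arXiv:2203.16596 — 3 statements merged into one kernel-verified Lean document; each statement's English description precedes it below -/
import Mathlib

section
/- Let (Omega, C, Gamma) be a naive convex co-compact triple and let X be a Gamma-invariant, strongly isolated collection of closed unbounded convex subsets of C. Then for every compact subset K of C, the set { X in X : X ∩ K ≠ empty } is finite. -/
open Set Filter Topology

noncomputable section

/-- The vector space `ℝ^d`. -/
abbrev Vd (d : ℕ) := Fin d → ℝ

/-- Real projective space `P(ℝ^d)`. -/
abbrev Proj (d : ℕ) := Projectivization ℝ (Vd d)

instance (d : ℕ) : TopologicalSpace (Proj d) :=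
  instTopologicalSpaceQuotient (s := projectivizationSetoid ℝ (Vd d))

variable {d : ℕ}

/-- The affine chart associated to a nonzero linear functional `f`: a point `[v]` with
`f v ≠ 0` is sent to the representative `v / f v` in the affine hyperplane `{w : f w = 1}`. -/
def pchart (f : Vd d →ₗ[ℝ] ℝ) (x : Proj d) : Vd d := (f x.rep)⁻¹ • x.rep

/-- `C ⊆ P(ℝ^d)` is properly convex, realized in the affine chart determined by `f`:
its closure lies in the chart, and its image there is a bounded convex set. -/
structure IsPC (f : Vd d →ₗ[ℝ] ℝ) (C : Set (Proj d)) : Prop where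
  chartOK : ∀ x ∈ closure C, f (Projectivization.rep x) ≠ 0
  bounded : Bornology.IsBounded (pchart f '' C)
  convex : Convex ℝ (pchart f '' C)

/-- A properly convex domain: a nonempty open properly convex subset of `P(ℝ^d)`. -/
structure IsPCDomain (f : Vd d →ₗ[ℝ] ℝ) (Ω : Set (Proj d)) : Prop where
  pc : IsPC f Ω
  isOpen : IsOpen Ω
  nonempty : Ω.Nonempty

/-- The open projective segment `(x,y)`, computed in the affine chart of `f`. -/
def poseg (f : Vd d →ₗ[ℝ] ℝ) (x y : Proj d) : Set (Proj d) :=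
  {z | ∃ w ∈ openSegment ℝ (pchart f x) (pchart f y), ∃ hw : w ≠ 0, z = Projectivization.mk ℝ w hw}

/-- The closed projective segment `[x,y]`, computed in the affine chart of `f`. -/
def pcseg (f : Vd d →ₗ[ℝ] ℝ) (x y : Proj d) : Set (Proj d) :=
  {z | ∃ w ∈ segment ℝ (pchart f x) (pchart f y), ∃ hw : w ≠ 0, z = Projectivization.mk ℝ w hw}

/-- Parameters `t` for which `x + t(y - x)` lies in the closure of `K`. -/
def segSet (K : Set (Vd d)) (x y : Vd d) : Set ℝ := {t : ℝ | x + t • (y - x) ∈ closure K}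

/-- Hilbert distance on a bounded convex set `K` in an affine chart, via the cross ratio:
with `s = sSup`, `r = sInf` of the parameter set (so the boundary points are
`a = x + r(y-x)`, `b = x + s(y-x)`, ordered `a,x,y,b`), this is
`(1/2) log ( s(1-r) / ((s-1)(-r)) ) = (1/2) log (|x-b||y-a| / (|x-a||y-b|))`. -/
def affHilbertDist (K : Set (Vd d)) (x y : Vd d) : ℝ :=
  if x = y then 0 else
    (1/2) * Real.log ((sSup (segSet K x y) * (1 - sInf (segSet K x y))) /
      ((sSup (segSet K x y) - 1) * (- sInf (segSet K x y))))

/-- The Hilbert metric of a properly convex set `Ω`, in the chart of `f`. -/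
def hdist (f : Vd d →ₗ[ℝ] ℝ) (Ω : Set (Proj d)) (x y : Proj d) : ℝ :=
  affHilbertDist (pchart f '' Ω) (pchart f x) (pchart f y)

/-- The open face of a point `x` of the closure of an affine convex set `K`:
`x` together with all `y` in the closure such that some open segment contained in the closure
contains both `x` and `y`. -/
def affFace (K : Set (Vd d)) (x : Vd d) : Set (Vd d) :=
  insert x {y ∈ closure K | ∃ a b : Vd d, openSegment ℝ a b ⊆ closure K ∧
      x ∈ openSegment ℝ a b ∧ y ∈ openSegment ℝ a b}

/-- The open face `F_C(x)` of a point `x ∈ closure C`, for `C` properly convex in the chart of `f`. -/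
def pface (f : Vd d →ₗ[ℝ] ℝ) (C : Set (Proj d)) (x : Proj d) : Set (Proj d) :=
  insert x {y ∈ closure C | pchart f y ∈ affFace (pchart f '' C) (pchart f x)}

/-- `F_C(A) = ⋃_{x ∈ A} F_C(x)`. -/
def pfaceSet (f : Vd d →ₗ[ℝ] ℝ) (C : Set (Proj d)) (A : Set (Proj d)) : Set (Proj d) :=
  ⋃ x ∈ A, pface f C x

/-- The Hilbert metric of the open face `F_C(x)` (a properly convex set open in its span). -/
def pfaceDist (f : Vd d →ₗ[ℝ] ℝ) (C : Set (Proj d)) (x : Proj d) (p q : Proj d) : ℝ :=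
  affHilbertDist (pchart f '' pface f C x) (pchart f p) (pchart f q)

/-- The ideal boundary `∂ᵢ C = closure C ∩ ∂Ω` of a subset `C` of a domain `Ω`. -/
def idealBdry (Ω C : Set (Proj d)) : Set (Proj d) := closure C ∩ frontier Ω

/-- Linear automorphisms of `ℝ^d` (inducing projective transformations). -/
abbrev GLd (d : ℕ) := (Vd d) ≃ₗ[ℝ] (Vd d)

/-- The projective action of a linear automorphism. -/
def pact (g : GLd d) (x : Proj d) : Proj d := Projectivization.map g.toLinearMap g.injective x

/-- Orbit of a point under a set of linear automorphisms. -/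
def orbitOf (S : Set (GLd d)) (p : Proj d) : Set (Proj d) := {q | ∃ γ ∈ S, q = pact γ p}

/-- The limit set of a set of automorphisms of `Ω`: all boundary accumulation points of orbits. -/
def limitSetOf (Ω : Set (Proj d)) (S : Set (GLd d)) : Set (Proj d) :=
  frontier Ω ∩ ⋃ p ∈ Ω, closure (orbitOf S p)

/-- The limit set of a subgroup. -/
def limitSet (Ω : Set (Proj d)) (Γ : Subgroup (GLd d)) : Set (Proj d) :=
  limitSetOf Ω {γ : GLd d | γ ∈ Γ}

/-- Open `r`-neighborhood of `A` in `(Ω, hdist)`. -/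
def hnbhd (f : Vd d →ₗ[ℝ] ℝ) (Ω A : Set (Proj d)) (r : ℝ) : Set (Proj d) :=
  {x ∈ Ω | ∃ a ∈ A, hdist f Ω x a < r}

/-- Open metric ball in `(Ω, hdist)`. -/
def hball (f : Vd d →ₗ[ℝ] ℝ) (Ω : Set (Proj d)) (x₀ : Proj d) (r : ℝ) : Set (Proj d) :=
  {y ∈ Ω | hdist f Ω x₀ y < r}

/-- The Hilbert-metric diameter of `A` is at most `D`. -/
def DiamLE (f : Vd d →ₗ[ℝ] ℝ) (Ω A : Set (Proj d)) (D : ℝ) : Prop :=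
  ∀ x ∈ A, ∀ y ∈ A, hdist f Ω x y ≤ D

/-- `X` is unbounded in `(Ω, hdist)`. -/
def HUnbounded (f : Vd d →ₗ[ℝ] ℝ) (Ω X : Set (Proj d)) : Prop := ¬ ∃ D : ℝ, DiamLE f Ω X D

/-- A strongly isolated collection: intersections of `r`-neighborhoods of distinct
members have uniformly bounded diameter. -/
def StronglyIsolated (f : Vd d →ₗ[ℝ] ℝ) (Ω : Set (Proj d)) (𝒳 : Set (Set (Proj d))) : Prop :=
  ∀ r > (0:ℝ), ∃ D > (0:ℝ), ∀ X₁ ∈ 𝒳, ∀ X₂ ∈ 𝒳, X₁ ≠ X₂ →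
    DiamLE f Ω (hnbhd f Ω X₁ r ∩ hnbhd f Ω X₂ r) D

/-- A `Γ`-invariant collection of sets. -/
def GInvariant (Γ : Subgroup (GLd d)) (𝒳 : Set (Set (Proj d))) : Prop :=
  ∀ γ ∈ Γ, ∀ X ∈ 𝒳, pact γ '' X ∈ 𝒳

/-- A naive convex co-compact triple `(Ω, C, Γ)`. -/
structure IsNCC (f : Vd d →ₗ[ℝ] ℝ) (Ω C : Set (Proj d)) (Γ : Subgroup (GLd d)) : Prop where
  dom : IsPCDomain f Ω
  subset : C ⊆ Ω
  nonempty : C.Nonempty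
  closedIn : closure C ∩ Ω ⊆ C
  convex : Convex ℝ (pchart f '' C)
  invΩ : ∀ γ ∈ Γ, pact γ '' Ω = Ω
  invC : ∀ γ ∈ Γ, pact γ '' C = C
  discrete : ∀ K : Set (Proj d), K ⊆ Ω → IsCompact K →
      {γ : GLd d | γ ∈ Γ ∧ (pact γ '' K ∩ K).Nonempty}.Finite
  cocompact : ∃ K : Set (Proj d), K ⊆ C ∧ IsCompact K ∧ ∀ x ∈ C, ∃ γ ∈ Γ, pact γ x ∈ K

/-- `𝒳` is a collection of closed unbounded convex subsets of `C`. -/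
structure IsCUC (f : Vd d →ₗ[ℝ] ℝ) (Ω C : Set (Proj d)) (𝒳 : Set (Set (Proj d))) : Prop where
  sub : ∀ X ∈ 𝒳, X ⊆ C
  closedIn : ∀ X ∈ 𝒳, closure X ∩ Ω ⊆ X
  unbdd : ∀ X ∈ 𝒳, HUnbounded f Ω X
  convex : ∀ X ∈ 𝒳, Convex ℝ (pchart f '' X)

/-- The standard `k`-dimensional projective simplex, with vertices `e_0, …, e_k`. -/
def stdSimplexP (d k : ℕ) : Set (Proj d) :=
  {x : Proj d | ∃ (c : Vd d) (hc : c ≠ 0), (∀ i : Fin d, (i : ℕ) ≤ k → 0 < c i) ∧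
      (∀ i : Fin d, k < (i : ℕ) → c i = 0) ∧ x = Projectivization.mk ℝ c hc}

/-- `S` is a `k`-dimensional projective simplex. -/
def IsSimplex (k : ℕ) (S : Set (Proj d)) : Prop :=
  ∃ g : GLd d, pact g '' stdSimplexP d k = S

/-- `S` is properly embedded in `C` (the inclusion is a proper map). -/
def ProperlyEmbedded (C S : Set (Proj d)) : Prop := S ⊆ C ∧ closure S ∩ C ⊆ S

/-- `𝒳` coarsely contains the properly embedded simplices of `C` of dimension at least two. -/
def CoarselyContainsSimplices (f : Vd d →ₗ[ℝ] ℝ) (Ω C : Set (Proj d))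
    (𝒳 : Set (Set (Proj d))) : Prop :=
  ∃ D > (0:ℝ), ∀ k : ℕ, 2 ≤ k → ∀ S : Set (Proj d), IsSimplex k S → ProperlyEmbedded C S →
    ∃ X ∈ 𝒳, S ⊆ hnbhd f Ω X D

/-- A peripheral family of the naive convex co-compact triple `(Ω, C, Γ)`. -/
def IsPeripheralFamily (f : Vd d →ₗ[ℝ] ℝ) (Ω C : Set (Proj d)) (Γ : Subgroup (GLd d))
    (𝒳 : Set (Set (Proj d))) : Prop :=
  GInvariant Γ 𝒳 ∧ StronglyIsolated f Ω 𝒳 ∧ CoarselyContainsSimplices f Ω C 𝒳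

/-- `Hausdorff distance between A and B (w.r.t. the distance function ρ) is at most M`. -/
def HausdorffLE {α : Type*} (ρ : α → α → ℝ) (A B : Set α) (M : ℝ) : Prop :=
  (∀ a ∈ A, ∀ ε > (0:ℝ), ∃ b ∈ B, ρ a b < M + ε) ∧
  (∀ b ∈ B, ∀ ε > (0:ℝ), ∃ a ∈ A, ρ a b < M + ε)

/-- The closed convex hull of `A ⊆ closure Ω` taken inside `closure Ω`, in the chart of `f`. -/
def projConvHull (f : Vd d →ₗ[ℝ] ℝ) (Ω A : Set (Proj d)) : Set (Proj d) :=
  {z ∈ closure Ω | pchart f z ∈ closure (convexHull ℝ (pchart f '' A))}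

/-- The convex core of `Γ`: the closed convex hull of the limit set, intersected with `Ω`. -/
def pcore (f : Vd d →ₗ[ℝ] ℝ) (Ω : Set (Proj d)) (Γ : Subgroup (GLd d)) : Set (Proj d) :=
  projConvHull f Ω (limitSet Ω Γ) ∩ Ω

/-- `Γ` is a convex co-compact subgroup of `Aut(Ω)`. -/
structure IsCCSubgroup (f : Vd d →ₗ[ℝ] ℝ) (Ω : Set (Proj d)) (Γ : Subgroup (GLd d)) : Prop where
  dom : IsPCDomain f Ω
  invΩ : ∀ γ ∈ Γ, pact γ '' Ω = Ω
  discrete : ∀ K : Set (Proj d), K ⊆ Ω → IsCompact K →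
      {γ : GLd d | γ ∈ Γ ∧ (pact γ '' K ∩ K).Nonempty}.Finite
  coreNonempty : (pcore f Ω Γ).Nonempty
  cocompact : ∃ K : Set (Proj d), K ⊆ pcore f Ω Γ ∧ IsCompact K ∧
      ∀ x ∈ pcore f Ω Γ, ∃ γ ∈ Γ, pact γ x ∈ K


namespace Stmt5Aux

open Projectivization

variable {d : ℕ}

lemma mk_smul_eq {c : ℝ} (hc : c ≠ 0) {v : Vd d} (hv : v ≠ 0) (h2 : c • v ≠ 0) :
    Projectivization.mk ℝ (c • v) h2 = Projectivization.mk ℝ v hv :=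
  (Projectivization.mk_eq_mk_iff ℝ _ _ _ _).mpr ⟨Units.mk0 c hc, by simp [Units.smul_def]⟩

lemma exists_rep_mk {v : Vd d} (hv : v ≠ 0) :
    ∃ c : ℝ, c ≠ 0 ∧ (Projectivization.mk ℝ v hv).rep = c • v := by
  have h := Projectivization.mk_rep (Projectivization.mk ℝ v hv)
  rw [Projectivization.mk_eq_mk_iff] at h
  obtain ⟨a, ha⟩ := h
  exact ⟨(a : ℝ), a.ne_zero, by rw [← ha, Units.smul_def]⟩

lemma pchart_mk (f : Vd d →ₗ[ℝ] ℝ) {v : Vd d} (hv : v ≠ 0) (hf : f v ≠ 0) :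
    pchart f (Projectivization.mk ℝ v hv) = (f v)⁻¹ • v := by
  obtain ⟨c, hc, hrep⟩ := exists_rep_mk (v := v) hv
  rw [pchart, hrep]
  rw [map_smul, smul_smul, smul_eq_mul]
  congr 1
  field_simp

lemma pchart_mk_of_one (f : Vd d →ₗ[ℝ] ℝ) {v : Vd d} (hv : v ≠ 0) (hf : f v = 1) :
    pchart f (Projectivization.mk ℝ v hv) = v := by
  rw [pchart_mk f hv (by rw [hf]; norm_num), hf]
  simp

lemma f_pchart (f : Vd d →ₗ[ℝ] ℝ) (x : Proj d) (hx : f x.rep ≠ 0) : f (pchart f x) = 1 := by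
  rw [pchart, map_smul, smul_eq_mul]
  field_simp

lemma pchart_ne_zero (f : Vd d →ₗ[ℝ] ℝ) (x : Proj d) (hx : f x.rep ≠ 0) : pchart f x ≠ 0 := by
  intro h
  have := f_pchart f x hx
  rw [h] at this
  simp at this

lemma mk_pchart (f : Vd d →ₗ[ℝ] ℝ) (x : Proj d) (hx : f x.rep ≠ 0) (h0 : pchart f x ≠ 0) :
    Projectivization.mk ℝ (pchart f x) h0 = x := by
  have hrep : x.rep ≠ 0 := Projectivization.rep_nonzero x
  exact (mk_smul_eq (inv_ne_zero hx) hrep h0).trans (Projectivization.mk_rep x)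

end Stmt5Aux
namespace Stmt5Aux

/-- total version of `Projectivization.mk`. -/
def mkT (x₀ : Proj d) (v : Vd d) : Proj d :=
  if h : v ≠ 0 then Projectivization.mk ℝ v h else x₀

lemma mkT_eq (x₀ : Proj d) {v : Vd d} (hv : v ≠ 0) : mkT x₀ v = Projectivization.mk ℝ v hv :=
  dif_pos hv

lemma continuous_mkSub : Continuous (fun p : {v : Vd d // v ≠ 0} =>
    (Quotient.mk'' p : Proj d)) := continuous_quotient_mk'

lemma continuousOn_mkT (x₀ : Proj d) : ContinuousOn (mkT x₀) {v : Vd d | v ≠ 0} := by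
  have hop : IsOpen {v : Vd d | v ≠ 0} := isOpen_compl_singleton
  rw [continuousOn_open_iff hop]
  intro t ht
  have : {v : Vd d | v ≠ 0} ∩ mkT x₀ ⁻¹' t =
      Subtype.val '' ((fun p : {v : Vd d // v ≠ 0} => (Quotient.mk'' p : Proj d)) ⁻¹' t) := by
    ext v
    constructor
    · rintro ⟨hv, hm⟩
      refine ⟨⟨v, hv⟩, ?_, rfl⟩
      rw [Set.mem_preimage, mkT_eq x₀ hv] at hm; exact hm
    · rintro ⟨⟨w, hw⟩, hm, rfl⟩
      refine ⟨hw, ?_⟩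
      show mkT x₀ w ∈ t; rw [mkT_eq x₀ hw]; exact hm
  rw [this]
  exact hop.isOpenMap_subtype_val _ (continuous_mkSub.isOpen_preimage t ht)

lemma isOpen_P1 (f : Vd d →ₗ[ℝ] ℝ) : IsOpen {x : Proj d | f x.rep ≠ 0} := by
  letI : Setoid {v : Vd d // v ≠ 0} := projectivizationSetoid ℝ (Vd d)
  refine (isQuotientMap_quotient_mk' (s := projectivizationSetoid ℝ (Vd d))).isOpen_preimage.mp ?_
  have : (Quotient.mk' ⁻¹' {x : Proj d | f x.rep ≠ 0}) = {p : {v : Vd d // v ≠ 0} | f p.val ≠ 0} := by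
    ext ⟨v, hv⟩
    have : (Quotient.mk' ⟨v, hv⟩ : Proj d) = Projectivization.mk ℝ v hv := rfl
    simp only [Set.mem_preimage, Set.mem_setOf_eq, this]
    obtain ⟨c, hc, hrep⟩ := exists_rep_mk (v := v) hv
    show f (Projectivization.mk ℝ v hv).rep ≠ 0 ↔ f v ≠ 0
    rw [hrep, map_smul, smul_eq_mul]
    constructor
    · intro h h2; exact h (by rw [h2, mul_zero])
    · intro h h2; exact h (by simpa [hc] using h2)
  refine (congrArg IsOpen this).mpr ?_
  exact ((f.continuous_of_finiteDimensional).comp continuous_subtype_val).isOpen_preimage _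
    isOpen_compl_singleton

lemma continuousOn_pchart (f : Vd d →ₗ[ℝ] ℝ) :
    ContinuousOn (pchart f) {x : Proj d | f x.rep ≠ 0} := by
  letI : Setoid {v : Vd d // v ≠ 0} := projectivizationSetoid ℝ (Vd d)
  have hop := isOpen_P1 f
  rw [continuousOn_open_iff hop]
  intro t ht
  refine (isQuotientMap_quotient_mk' (s := projectivizationSetoid ℝ (Vd d))).isOpen_preimage.mp ?_
  have hfc : Continuous (fun p : {v : Vd d // v ≠ 0} => f p.val) :=
    (f.continuous_of_finiteDimensional).comp continuous_subtype_val
  have hgc : ContinuousOn (fun p : {v : Vd d // v ≠ 0} => (f p.val)⁻¹ • p.val)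
      {p : {v : Vd d // v ≠ 0} | f p.val ≠ 0} :=
    (hfc.continuousOn.inv₀ (fun x hx => hx)).smul continuous_subtype_val.continuousOn
  have hops : IsOpen {p : {v : Vd d // v ≠ 0} | f p.val ≠ 0} :=
    hfc.isOpen_preimage _ isOpen_compl_singleton
  have key : (Quotient.mk' ⁻¹' ({x : Proj d | f x.rep ≠ 0} ∩ pchart f ⁻¹' t)) =
      {p : {v : Vd d // v ≠ 0} | f p.val ≠ 0} ∩
        (fun p : {v : Vd d // v ≠ 0} => (f p.val)⁻¹ • p.val) ⁻¹' t := by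
    ext ⟨v, hv⟩
    have hmk : (Quotient.mk' ⟨v, hv⟩ : Proj d) = Projectivization.mk ℝ v hv := rfl
    obtain ⟨c, hc, hrep⟩ := exists_rep_mk (v := v) hv
    have hfrep : f (Projectivization.mk ℝ v hv).rep = c * f v := by
      rw [hrep, map_smul, smul_eq_mul]
    constructor
    · rintro ⟨h1, h2⟩
      rw [hmk] at h1 h2
      have h1' : c * f v ≠ 0 := by rw [← hfrep]; exact h1
      have hfv : f v ≠ 0 := fun h' => h1' (by rw [h', mul_zero])
      refine ⟨hfv, ?_⟩
      change pchart f (Projectivization.mk ℝ v hv) ∈ t at h2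
      rw [pchart_mk f hv hfv] at h2; exact h2
    · rintro ⟨h1, h2⟩
      have hfv : f v ≠ 0 := h1
      constructor
      · rw [hmk]
        show f (Projectivization.mk ℝ v hv).rep ≠ 0
        rw [hfrep]
        exact mul_ne_zero hc hfv
      · rw [hmk]; change pchart f (Projectivization.mk ℝ v hv) ∈ t; rw [pchart_mk f hv hfv]; exact h2
  refine (congrArg IsOpen key).mpr ?_
  exact (continuousOn_open_iff hops).mp hgc t ht

/-- Characterization of the chart image of a set of points where `f ∘ rep ≠ 0`. -/
lemma mem_chart_iff (f : Vd d →ₗ[ℝ] ℝ) {S : Set (Proj d)}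
    (hok : ∀ x ∈ S, f x.rep ≠ 0) (u : Vd d) :
    u ∈ pchart f '' S ↔ f u = 1 ∧ ∃ hu : u ≠ 0, Projectivization.mk ℝ u hu ∈ S := by
  constructor
  · rintro ⟨x, hx, rfl⟩
    have h1 := f_pchart f x (hok x hx)
    have h0 := pchart_ne_zero f x (hok x hx)
    exact ⟨h1, h0, by rw [mk_pchart f x (hok x hx) h0]; exact hx⟩
  · rintro ⟨h1, hu, hm⟩
    exact ⟨Projectivization.mk ℝ u hu, hm, pchart_mk_of_one f hu h1⟩

end Stmt5Aux
namespace Stmt5Aux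

lemma comboEq (a b : Vd d) (t : ℝ) : a + t • (b - a) = (1 - t) • a + t • b := by
  rw [smul_sub, sub_smul, one_smul]
  abel

/-- Convex combination of a point of `U` and a point of `closure U` (with positive weight on
the `U`-point) lies in `U`, given `U` "open in the hyperplane". -/
lemma combo_mem {U : Set (Vd d)} (f : Vd d →ₗ[ℝ] ℝ) (hconv : Convex ℝ U)
    (hU1 : ∀ u ∈ U, f u = 1)
    (hopen : ∀ u ∈ U, ∃ ε > (0:ℝ), ∀ v : Vd d, f v = 0 → ‖v‖ < ε → u + v ∈ U)
    {x c : Vd d} (hx : x ∈ U) (hc : c ∈ closure U)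
    {t : ℝ} (ht0 : 0 ≤ t) (ht1 : t < 1) : (1 - t) • x + t • c ∈ U := by
  rcases eq_or_lt_of_le ht0 with h0 | h0
  · simp [← h0, hx]
  obtain ⟨ε, hε, hball⟩ := hopen x hx
  have ht1'' : (0:ℝ) < 1 - t := by linarith
  have hpos : 0 < (1 - t) / t * ε := by positivity
  obtain ⟨c', hc', hcc'⟩ := Metric.mem_closure_iff.mp hc _ hpos
  set v : Vd d := (t / (1 - t)) • (c - c') with hv
  have hfv : f v = 0 := by
    have h1 : f c = 1 := by
      have : closure U ⊆ {w : Vd d | f w = 1} := by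
        apply closure_minimal (fun w hw => hU1 w hw)
        exact isClosed_eq (f.continuous_of_finiteDimensional) continuous_const
      exact this hc
    rw [hv, map_smul, map_sub, h1, hU1 c' hc', smul_eq_mul]
    ring
  have hnv : ‖v‖ < ε := by
    rw [hv, norm_smul]
    have hd : ‖c - c'‖ < (1 - t) / t * ε := by rwa [← dist_eq_norm]
    have ht1' : (0:ℝ) < 1 - t := by linarith
    have : |t / (1 - t)| = t / (1 - t) := abs_of_pos (by positivity)
    rw [Real.norm_eq_abs, this]
    calc t / (1 - t) * ‖c - c'‖ < t / (1 - t) * ((1 - t) / t * ε) := by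
          apply mul_lt_mul_of_pos_left hd (by positivity)
      _ = ε := by field_simp
  have hx' : x + v ∈ U := hball v hfv hnv
  have hkey : (1 - t) • (x + v) + t • c' = (1 - t) • x + t • c := by
    rw [hv, smul_add, smul_smul]
    rw [show (1 - t) * (t / (1 - t)) = t by field_simp]
    rw [smul_sub]
    abel
  rw [← hkey]
  exact hconv hx' hc' (by linarith) ht0 (by ring)

/-- Upper bound on the Hilbert distance of two `δ`-deep points. -/
lemma affH_le (f : Vd d →ₗ[ℝ] ℝ) {U : Set (Vd d)} (hUb : Bornology.IsBounded U)
    {z w : Vd d} {δ : ℝ} (hδ : 0 < δ)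
    (hz : ∀ v : Vd d, f v = 0 → ‖v‖ ≤ δ → z + v ∈ closure U)
    (hw : ∀ v : Vd d, f v = 0 → ‖v‖ ≤ δ → w + v ∈ closure U)
    (hfz : f z = 1) (hfw : f w = 1) :
    affHilbertDist U z w ≤ ‖w - z‖ / δ := by
  rcases eq_or_ne z w with rfl | hne
  · rw [affHilbertDist, if_pos rfl]
    positivity
  have hn : (0:ℝ) < ‖w - z‖ := by
    rw [norm_pos_iff]; exact sub_ne_zero_of_ne (Ne.symm hne)
  set β : ℝ := δ / ‖w - z‖ with hβ
  have hβ0 : 0 < β := by positivity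
  have hfwz : f (w - z) = 0 := by rw [map_sub, hfz, hfw]; ring
  set A := segSet U z w with hA
  -- membership facts
  have hmem : ∀ u : ℝ, |u| * ‖w - z‖ ≤ δ → u ∈ A := by
    intro u hu
    have : z + u • (w - z) ∈ closure U := by
      apply hz (u • (w - z))
      · rw [map_smul, hfwz, smul_eq_mul, mul_zero]
      · rw [norm_smul, Real.norm_eq_abs]; exact hu
    exact this
  have h0A : (0:ℝ) ∈ A := hmem 0 (by simp [le_of_lt hδ])
  have hup : (1 + β) ∈ A := by
    have : z + (1 + β) • (w - z) ∈ closure U := by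
      have : z + (1 + β) • (w - z) = w + β • (w - z) := by
        rw [add_smul, one_smul]; abel
      rw [this]
      apply hw (β • (w - z))
      · rw [map_smul, hfwz, smul_eq_mul, mul_zero]
      · rw [norm_smul, Real.norm_eq_abs, abs_of_pos hβ0, hβ]
        field_simp
        exact le_rfl
    exact this
  have hdown : (-β) ∈ A := by
    apply hmem
    rw [abs_neg, abs_of_pos hβ0, hβ]
    field_simp
    exact le_rfl
  -- boundedness of A
  obtain ⟨R, hR⟩ := hUb.closure.subset_closedBall 0
  have hAbd : ∀ u ∈ A, |u| ≤ (R + ‖z‖) / ‖w - z‖ := by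
    intro u hu
    have h1 : ‖z + u • (w - z)‖ ≤ R := by
      have := hR hu
      rwa [Metric.mem_closedBall, dist_zero_right] at this
    have h2 : |u| * ‖w - z‖ ≤ R + ‖z‖ := by
      have h3 : ‖(z + u • (w - z)) - z‖ ≤ ‖z + u • (w - z)‖ + ‖z‖ := norm_sub_le _ _
      have h4 : (z + u • (w - z)) - z = u • (w - z) := by abel
      rw [h4, norm_smul, Real.norm_eq_abs] at h3
      linarith
    rw [le_div_iff₀ hn]
    exact h2
  have hbddA : BddAbove A := ⟨(R + ‖z‖) / ‖w - z‖, fun u hu => (abs_le.mp (hAbd u hu)).2⟩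
  have hbddB : BddBelow A := ⟨-((R + ‖z‖) / ‖w - z‖), fun u hu => (abs_le.mp (hAbd u hu)).1⟩
  set s := sSup A with hs
  set r := sInf A with hr
  have hsge : 1 + β ≤ s := le_csSup hbddA hup
  have hrle : r ≤ -β := csInf_le hbddB hdown
  have ha : 0 < s - 1 := by linarith
  have hb : 0 < -r := by linarith
  have hE : (s * (1 - r)) / ((s - 1) * (-r)) ≤ (1 + 1/β)^2 := by
    have h1 : (s * (1 - r)) / ((s - 1) * (-r)) = (1 + 1/(s-1)) * (1 + 1/(-r)) := by
      field_simp [ha.ne', (show r < 0 by linarith).ne]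
      ring
    rw [h1]
    have h2 : 1 + 1/(s-1) ≤ 1 + 1/β := by
      have := one_div_le_one_div_of_le hβ0 (by linarith : β ≤ s - 1)
      linarith
    have h3 : 1 + 1/(-r) ≤ 1 + 1/β := by
      have := one_div_le_one_div_of_le hβ0 (by linarith : β ≤ -r)
      linarith
    have hp2 : (0:ℝ) < 1 + 1/(-r) := by positivity
    have hp1 : (0:ℝ) ≤ 1 + 1/(s-1) := by positivity
    calc (1 + 1/(s-1)) * (1 + 1/(-r)) ≤ (1 + 1/β) * (1 + 1/β) :=
          mul_le_mul h2 h3 (le_of_lt hp2) (by positivity)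
      _ = (1 + 1/β)^2 := by ring
  have hEpos : 0 < (s * (1 - r)) / ((s - 1) * (-r)) := by
    apply div_pos
    · have : 0 < s := by linarith
      nlinarith
    · exact mul_pos ha hb
  have hfinal : affHilbertDist U z w = (1/2) * Real.log ((s * (1 - r)) / ((s - 1) * (-r))) := by
    rw [affHilbertDist, if_neg hne]
  rw [hfinal]
  calc (1/2) * Real.log ((s * (1 - r)) / ((s - 1) * (-r)))
      ≤ (1/2) * Real.log ((1 + 1/β)^2) := by
        have := Real.log_le_log hEpos hE
        linarith
    _ = Real.log (1 + 1/β) := by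
        rw [show ((1:ℝ) + 1/β)^2 = (1 + 1/β)^(2:ℕ) by norm_num, Real.log_pow]
        push_cast; ring
    _ ≤ 1/β := by
        have h := Real.log_le_sub_one_of_pos (show (0:ℝ) < 1 + 1/β by positivity)
        linarith
    _ = ‖w - z‖ / δ := by
        rw [hβ]
        field_simp

end Stmt5Aux
namespace Stmt5Aux

/-- Lower bound: distance from a deep point toward a boundary point grows like `log(1/(1-t))`. -/
lemma affH_ge (f : Vd d →ₗ[ℝ] ℝ) {U : Set (Vd d)} (hUb : Bornology.IsBounded U)
    (hconv : Convex ℝ U) (hU1 : ∀ u ∈ U, f u = 1)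
    (hopen : ∀ u ∈ U, ∃ ε > (0:ℝ), ∀ v : Vd d, f v = 0 → ‖v‖ < ε → u + v ∈ U)
    {x b : Vd d} (hx : x ∈ U) (hb : b ∈ closure U) (hbU : b ∉ U)
    {t : ℝ} (ht0 : 0 < t) (ht1 : t < 1) :
    (1/2) * Real.log (1/(1-t)) ≤ affHilbertDist U x (x + t • (b - x)) := by
  have hfcl : ∀ u ∈ closure U, f u = 1 := by
    intro u hu
    have : closure U ⊆ {w : Vd d | f w = 1} := by
      apply closure_minimal (fun w hw => hU1 w hw)
      exact isClosed_eq (f.continuous_of_finiteDimensional) continuous_const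
    exact this hu
  have hbx : b - x ≠ 0 := fun h => hbU (by rw [sub_eq_zero.mp h]; exact hx)
  have hbxn : (0:ℝ) < ‖b - x‖ := norm_pos_iff.mpr hbx
  set p := x + t • (b - x) with hp
  have hpx : p - x = t • (b - x) := by rw [hp]; abel
  have hne : x ≠ p := by
    intro h
    have : t • (b - x) = 0 := by rw [← hpx, ← h]; abel
    rcases smul_eq_zero.mp this with h' | h'
    · linarith
    · exact hbx h'
  set A := segSet U x p with hA
  -- A = {u : x + (u*t) • (b - x) ∈ closure U}
  have hAmem : ∀ u : ℝ, (u ∈ A ↔ x + (u * t) • (b - x) ∈ closure U) := by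
    intro u
    rw [hA, segSet, Set.mem_setOf_eq, hpx, smul_smul]
  -- upper bound: every u ∈ A satisfies u ≤ 1/t
  have hub : ∀ u ∈ A, u ≤ 1/t := by
    intro u hu
    by_contra hgt
    push_neg at hgt
    have hut : 1 < u * t := by
      rw [div_lt_iff₀ ht0] at hgt
      linarith
    set θ : ℝ := 1/(u*t) with hθ
    have hθ0 : 0 < θ := by positivity
    have hθ1 : θ < 1 := by rw [hθ]; rw [div_lt_one (by linarith)]; linarith
    have hq : x + (u * t) • (b - x) ∈ closure U := (hAmem u).mp hu
    have hcombo : (1 - θ) • x + θ • (x + (u * t) • (b - x)) = b := by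
      rw [smul_add, smul_smul, hθ]
      rw [show 1/(u*t) * (u*t) = 1 by rw [one_div, inv_mul_cancel₀ (by linarith : (0:ℝ) < u*t).ne']]
      rw [one_smul, sub_smul, one_smul]
      abel
    have : b ∈ U := by
      rw [← hcombo]
      exact combo_mem f hconv hU1 hopen hx hq (le_of_lt hθ0) hθ1
    exact hbU this
  have hmemtop : (1/t) ∈ A := by
    rw [hAmem]
    rw [show 1/t * t = 1 by field_simp, one_smul]
    have : x + (b - x) = b := by abel
    rw [this]; exact hb
  have hAne : A.Nonempty := ⟨1/t, hmemtop⟩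
  have hbddA : BddAbove A := ⟨1/t, fun u hu => hub u hu⟩
  have hsup : sSup A = 1/t := le_antisymm (csSup_le hAne hub) (le_csSup hbddA hmemtop)
  -- negative element
  obtain ⟨ε, hε, hball⟩ := hopen x hx
  set u₀ : ℝ := -(ε / (2 * t * ‖b - x‖)) with hu₀
  have hu₀0 : u₀ < 0 := by
    rw [hu₀]
    have hq : 0 < ε / (2 * t * ‖b - x‖) := by positivity
    linarith
  have hmem₀ : u₀ ∈ A := by
    rw [hAmem]
    apply subset_closure
    apply hball
    · rw [map_smul, map_sub, hU1 x hx, hfcl b hb, smul_eq_mul]; ring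
    · rw [norm_smul, Real.norm_eq_abs]
      rw [abs_mul, abs_of_neg hu₀0, abs_of_pos ht0, hu₀]
      rw [show -(-(ε / (2 * t * ‖b - x‖))) = ε / (2 * t * ‖b - x‖) by ring]
      rw [show ε / (2 * t * ‖b - x‖) * t * ‖b - x‖ = ε / 2 by field_simp]
      linarith
  -- bddBelow
  obtain ⟨R, hR⟩ := hUb.closure.subset_closedBall 0
  have hAbd : ∀ u ∈ A, -((R + ‖x‖) / (t * ‖b - x‖)) ≤ u := by
    intro u hu
    rw [hAmem] at hu
    have h1 : ‖x + (u * t) • (b - x)‖ ≤ R := by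
      have := hR hu
      rwa [Metric.mem_closedBall, dist_zero_right] at this
    have h3 : ‖(x + (u * t) • (b - x)) - x‖ ≤ ‖x + (u * t) • (b - x)‖ + ‖x‖ := norm_sub_le _ _
    have h4 : (x + (u * t) • (b - x)) - x = (u * t) • (b - x) := by abel
    rw [h4, norm_smul, Real.norm_eq_abs, abs_mul, abs_of_pos ht0] at h3
    have h5 : |u| * (t * ‖b - x‖) ≤ R + ‖x‖ := by linarith [mul_assoc |u| t ‖b - x‖]
    have h6 : |u| ≤ (R + ‖x‖) / (t * ‖b - x‖) := by
      rw [le_div_iff₀ (by positivity)]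
      exact h5
    linarith [abs_le.mp h6]
  have hbddB : BddBelow A := ⟨-((R + ‖x‖) / (t * ‖b - x‖)), fun u hu => hAbd u hu⟩
  set r := sInf A with hr
  have hrneg : r < 0 := lt_of_le_of_lt (csInf_le hbddB hmem₀) hu₀0
  -- compute
  have hEq : affHilbertDist U x p =
      (1/2) * Real.log ((sSup A * (1 - r)) / ((sSup A - 1) * (-r))) := by
    rw [affHilbertDist, if_neg hne]
  rw [hEq, hsup]
  have h1t : (0:ℝ) < 1 - t := by linarith
  have hs1 : (0:ℝ) < 1/t - 1 := by
    rw [sub_pos, lt_div_iff₀ ht0]; linarith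
  have hmr : (0:ℝ) < -r := by linarith
  have hElb : 1/(1-t) ≤ (1/t * (1 - r)) / ((1/t - 1) * (-r)) := by
    rw [div_le_div_iff₀ h1t (mul_pos hs1 hmr)]
    have e1 : 1 * ((1/t - 1) * (-r)) = (1-t)/t * (-r) := by field_simp
    have e2 : 1/t * (1 - r) * (1 - t) = (1-t)/t * (1 - r) := by field_simp
    rw [e1, e2]
    apply mul_le_mul_of_nonneg_left (by linarith) (by positivity)
  have hpos : (0:ℝ) < 1/(1-t) := by positivity
  have := Real.log_le_log hpos hElb
  linarith

/-- Pigeonhole in a compact metric space. -/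
lemma pigeon {α : Type*} {M : Type*} [PseudoMetricSpace M] {T : Set M} (hT : IsCompact T)
    {S : Set α} (hS : S.Infinite) (F : α → M) (hF : ∀ X ∈ S, F X ∈ T) {η : ℝ} (hη : 0 < η) :
    ∃ X ∈ S, ∃ Y ∈ S, X ≠ Y ∧ dist (F X) (F Y) < η := by
  obtain ⟨t, ht⟩ := hT.elim_finite_subcover (fun c : M => Metric.ball c (η/2))
    (fun c => Metric.isOpen_ball) (fun x hx => Set.mem_iUnion.mpr ⟨x, Metric.mem_ball_self (by linarith)⟩)
  have hcover : S ⊆ ⋃ c ∈ t, {X ∈ S | F X ∈ Metric.ball c (η/2)} := by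
    intro X hX
    have := ht (hF X hX)
    rw [Set.mem_iUnion₂] at this ⊢
    obtain ⟨c, hc, hm⟩ := this
    exact ⟨c, hc, hX, hm⟩
  have : ∃ c ∈ t, {X ∈ S | F X ∈ Metric.ball c (η/2)}.Infinite := by
    by_contra hall
    push_neg at hall
    exact hS (Set.Finite.subset (Set.Finite.biUnion t.finite_toSet hall) hcover)
  obtain ⟨c, _, hinf⟩ := this
  obtain ⟨X, hX, Y, hY, hXY⟩ := hinf.nontrivial
  refine ⟨X, hX.1, Y, hY.1, hXY, ?_⟩
  calc dist (F X) (F Y) ≤ dist (F X) c + dist c (F Y) := dist_triangle _ _ _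
    _ < η/2 + η/2 := by
        apply add_lt_add hX.2
        rw [dist_comm]; exact hY.2
    _ = η := by ring

end Stmt5Aux
namespace Stmt5Aux

/-- An unbounded subset of `Ω` has a chart-closure point outside the chart of `Ω`. -/
lemma exists_bdry (f : Vd d →ₗ[ℝ] ℝ) {Ω X : Set (Proj d)}
    (hUb : Bornology.IsBounded (pchart f '' Ω))
    (hXsub : X ⊆ Ω)
    (hok : ∀ x ∈ Ω, f x.rep ≠ 0)
    (hthick : ∀ L : Set (Vd d), IsCompact L → L ⊆ pchart f '' Ω →
       ∃ δ > (0:ℝ), ∀ z ∈ L, ∀ v : Vd d, f v = 0 → ‖v‖ ≤ δ → z + v ∈ pchart f '' Ω)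
    (hunb : HUnbounded f Ω X) :
    ∃ b ∈ closure (pchart f '' X), b ∉ pchart f '' Ω := by
  by_contra hall
  push_neg at hall
  apply hunb
  set U := pchart f '' Ω with hUdef
  set L := closure (pchart f '' X) with hL
  have hXU : pchart f '' X ⊆ U := Set.image_mono hXsub
  have hLU : L ⊆ U := hall
  have hLc : IsCompact L := Metric.isCompact_of_isClosed_isBounded isClosed_closure (hUb.subset hXU).closure
  obtain ⟨δ, hδ0, hdeep⟩ := hthick L hLc hLU
  obtain ⟨R, hR⟩ := hUb.closure.subset_closedBall 0
  refine ⟨(R + R) / δ, ?_⟩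
  intro P hP Q hQ
  have hPc : pchart f P ∈ pchart f '' X := ⟨P, hP, rfl⟩
  have hQc : pchart f Q ∈ pchart f '' X := ⟨Q, hQ, rfl⟩
  have hnorm : ∀ u ∈ U, ‖u‖ ≤ R := by
    intro u hu
    have := hR (subset_closure hu)
    rwa [Metric.mem_closedBall, dist_zero_right] at this
  have hb : ‖pchart f Q - pchart f P‖ ≤ R + R := by
    calc ‖pchart f Q - pchart f P‖ ≤ ‖pchart f Q‖ + ‖pchart f P‖ := norm_sub_le _ _
      _ ≤ R + R := add_le_add (hnorm _ (hXU hQc)) (hnorm _ (hXU hPc))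
  have key := affH_le f hUb hδ0
    (fun v h1 h2 => subset_closure (hdeep _ (subset_closure hPc) v h1 h2))
    (fun v h1 h2 => subset_closure (hdeep _ (subset_closure hQc) v h1 h2))
    (f_pchart f P (hok P (hXsub hP))) (f_pchart f Q (hok Q (hXsub hQ)))
  have : hdist f Ω P Q = affHilbertDist U (pchart f P) (pchart f Q) := rfl
  rw [this]
  calc affHilbertDist U (pchart f P) (pchart f Q) ≤ ‖pchart f Q - pchart f P‖ / δ := key
    _ ≤ (R + R) / δ := by gcongr

end Stmt5Aux
namespace Stmt5Aux
lemma diffEq (a b a' b' : Vd d) (t : ℝ) :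
    (a' + t • (b' - a')) - (a + t • (b - a)) = (1 - t) • (a' - a) + t • (b' - b) := by
  rw [smul_sub, smul_sub, smul_sub, smul_sub, sub_smul, sub_smul, one_smul, one_smul]
  abel
end Stmt5Aux

open Stmt5Aux

/-- for a Γ-invariant strongly isolated collection `𝒳` of closed unbounded
convex subsets of `C`, only finitely many members of `𝒳` meet any compact `K ⊆ C`. -/
theorem stmt_5 {d : ℕ} (f : Vd d →ₗ[ℝ] ℝ) (Ω C : Set (Proj d)) (Γ : Subgroup (GLd d))
    (h : IsNCC f Ω C Γ) (𝒳 : Set (Set (Proj d))) (h𝒳 : IsCUC f Ω C 𝒳)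
    (hinv : GInvariant Γ 𝒳) (hiso : StronglyIsolated f Ω 𝒳)
    (K : Set (Proj d)) (hK : K ⊆ C) (hKc : IsCompact K) :
    {X ∈ 𝒳 | (X ∩ K).Nonempty}.Finite := by
  classical
  rw [← Set.not_infinite]
  intro hS
  set U := pchart f '' Ω with hUdef
  obtain ⟨x₀, hx₀⟩ := h.dom.nonempty
  have hCsub : C ⊆ Ω := h.subset
  have hok : ∀ x ∈ Ω, f x.rep ≠ 0 := fun x hx => h.dom.pc.chartOK x (subset_closure hx)
  have hU1 : ∀ u ∈ U, f u = 1 := by rintro u ⟨x, hx, rfl⟩; exact f_pchart f x (hok x hx)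
  have hU1c : ∀ u ∈ closure U, f u = 1 := by
    intro u hu
    have hcl : closure U ⊆ {w : Vd d | f w = 1} :=
      closure_minimal (fun w hw => hU1 w hw)
        (isClosed_eq f.continuous_of_finiteDimensional continuous_const)
    exact hcl hu
  have hUb : Bornology.IsBounded U := h.dom.pc.bounded
  have hUconv : Convex ℝ U := h.dom.pc.convex
  -- the open cone over Ω in the vector space
  set W : Set (Vd d) := {v : Vd d | v ≠ 0} ∩ (mkT x₀ ⁻¹' Ω) with hWdef
  have hWopen : IsOpen W :=
    (continuousOn_open_iff (isOpen_compl_singleton)).mp (continuousOn_mkT x₀) Ω h.dom.isOpen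
  have hUW : U ⊆ W := by
    intro u hu
    rw [mem_chart_iff f hok u] at hu
    obtain ⟨h1, hu0, hmem⟩ := hu
    exact ⟨hu0, by rw [Set.mem_preimage, mkT_eq x₀ hu0]; exact hmem⟩
  have hWU : ∀ v ∈ W, f v = 1 → v ∈ U := by
    rintro v ⟨hv0, hvΩ⟩ hfv
    rw [mem_chart_iff f hok v]
    refine ⟨hfv, hv0, ?_⟩
    rw [Set.mem_preimage, mkT_eq x₀ hv0] at hvΩ
    exact hvΩ
  -- thickening property: compacta inside U are uniformly deep
  have hthick : ∀ L : Set (Vd d), IsCompact L → L ⊆ U →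
      ∃ δ > (0:ℝ), ∀ z ∈ L, ∀ v : Vd d, f v = 0 → ‖v‖ ≤ δ → z + v ∈ U := by
    intro L hLc hLU
    obtain ⟨ε, hε, hthk⟩ := hLc.exists_thickening_subset_open hWopen (hLU.trans hUW)
    refine ⟨ε/2, by linarith, ?_⟩
    intro z hz v hfv hnv
    have hmem : z + v ∈ W := by
      apply hthk
      rw [Metric.mem_thickening_iff]
      refine ⟨z, hz, ?_⟩
      rw [dist_eq_norm, show z + v - z = v by abel]
      linarith
    exact hWU _ hmem (by rw [map_add, hU1 z (hLU hz), hfv]; ring)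
  have hopen : ∀ u ∈ U, ∃ ε > (0:ℝ), ∀ v : Vd d, f v = 0 → ‖v‖ < ε → u + v ∈ U := by
    intro u hu
    obtain ⟨δ, hδ, hd⟩ := hthick {u} isCompact_singleton (Set.singleton_subset_iff.mpr hu)
    exact ⟨δ, hδ, fun v hfv hnv => hd u rfl v hfv (le_of_lt hnv)⟩
  -- chart of K
  set Kc := pchart f '' K with hKcdef
  have hKP1 : K ⊆ {x : Proj d | f x.rep ≠ 0} := fun x hx => hok x (hCsub (hK hx))
  have hKcc : IsCompact Kc := hKc.image_of_continuousOn ((continuousOn_pchart f).mono hKP1)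
  have hKcU : Kc ⊆ U := Set.image_mono (hK.trans hCsub)
  obtain ⟨ε, hε0, hKdeep⟩ := hthick Kc hKcc hKcU
  -- strong isolation data for r = 1
  obtain ⟨D, hD0, hDiam⟩ := hiso 1 one_pos
  -- choose t*
  set tstar : ℝ := 1 - Real.exp (-(2*D+2)) with htsdef
  have hexp0 : 0 < Real.exp (-(2*D+2)) := Real.exp_pos _
  have hexp1 : Real.exp (-(2*D+2)) < 1 := by
    rw [show (1:ℝ) = Real.exp 0 by rw [Real.exp_zero]]
    exact Real.exp_lt_exp.mpr (by linarith)
  have hts0 : 0 < tstar := by rw [htsdef]; linarith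
  have hts1 : tstar < 1 := by rw [htsdef]; linarith
  set δ : ℝ := (1 - tstar) * ε / 2 with hδdef
  have h1ts : 0 < 1 - tstar := by linarith
  have hδ0 : 0 < δ := by rw [hδdef]; positivity
  set η : ℝ := δ / 4 with hηdef
  have hη0 : 0 < η := by rw [hηdef]; positivity
  -- deepness of the segment points
  have hdeep : ∀ a b : Vd d, a ∈ Kc → b ∈ closure U → ∀ t : ℝ, 0 ≤ t → t ≤ tstar →
      ∀ v : Vd d, f v = 0 → ‖v‖ ≤ δ → ((1 - t) • a + t • b) + v ∈ U := by
    intro a b ha hb t ht0 htle v hfv hnv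
    have h1t : 0 < 1 - t := by linarith
    have hnv2 : (1 - t)⁻¹ * ‖v‖ ≤ ε := by
      rw [inv_mul_le_iff₀ h1t]
      have h1 : δ ≤ (1 - t) * ε / 2 := by
        rw [hδdef]
        have : 1 - tstar ≤ 1 - t := by linarith
        nlinarith
      nlinarith
    have ha'U : a + (1 - t)⁻¹ • v ∈ U := by
      apply hKdeep a ha
      · rw [map_smul, hfv, smul_eq_mul, mul_zero]
      · rw [norm_smul, Real.norm_eq_abs, abs_of_pos (by positivity)]
        exact hnv2
    have hcombo : (1 - t) • (a + (1 - t)⁻¹ • v) + t • b = ((1 - t) • a + t • b) + v := by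
      rw [smul_add, smul_smul, mul_inv_cancel₀ (ne_of_gt h1t), one_smul]
      abel
    rw [← hcombo]
    exact combo_mem f hUconv hU1 hopen ha'U hb ht0 (by linarith)
  have hdeepa : ∀ a ∈ Kc, ∀ v : Vd d, f v = 0 → ‖v‖ ≤ δ → a + v ∈ closure U := by
    intro a ha v h1 h2
    have := hdeep a a ha (subset_closure (hKcU ha)) 0 le_rfl (le_of_lt hts0) v h1 h2
    simp only [sub_zero, one_smul, zero_smul, add_zero] at this
    exact subset_closure this
  -- choose data for each member of the family
  have hdata : ∀ X : Set (Proj d), ∃ ab : Vd d × Vd d,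
      (X ∈ 𝒳 ∧ (X ∩ K).Nonempty) →
        (∃ xP, xP ∈ X ∩ K ∧ ab.1 = pchart f xP) ∧
        ab.2 ∈ closure (pchart f '' X) ∧ ab.2 ∉ U := by
    intro X
    by_cases hX : X ∈ 𝒳 ∧ (X ∩ K).Nonempty
    · obtain ⟨xP, hxP⟩ := hX.2
      obtain ⟨b, hb, hbU⟩ := exists_bdry f hUb ((h𝒳.sub X hX.1).trans hCsub) hok
        (fun L hL1 hL2 => hthick L hL1 hL2) (h𝒳.unbdd X hX.1)
      exact ⟨(pchart f xP, b), fun _ => ⟨⟨xP, hxP, rfl⟩, hb, hbU⟩⟩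
    · exact ⟨(0,0), fun hc => absurd hc hX⟩
  choose F hF using hdata
  -- pigeonhole
  have hclUc : IsCompact (closure U) :=
    Metric.isCompact_of_isClosed_isBounded isClosed_closure hUb.closure
  have hTc : IsCompact ((closure U) ×ˢ (closure U)) := hclUc.prod hclUc
  have hFT : ∀ X ∈ {X ∈ 𝒳 | (X ∩ K).Nonempty}, F X ∈ (closure U) ×ˢ (closure U) := by
    intro X hX
    obtain ⟨⟨xP, hxP, h1⟩, h2, _⟩ := hF X hX
    constructor
    · rw [h1]
      exact subset_closure (hKcU ⟨xP, hxP.2, rfl⟩)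
    · exact closure_mono (Set.image_mono ((h𝒳.sub X hX.1).trans hCsub)) h2
  obtain ⟨X, hX, Y, hY, hXY, hFd⟩ := pigeon hTc hS F hFT hη0
  obtain ⟨⟨xPX, hxPX, haX⟩, hbXcl, hbXU⟩ := hF X hX
  obtain ⟨⟨xPY, hxPY, haY⟩, hbYcl, hbYU⟩ := hF Y hY
  set aX := (F X).1 with haXdef
  set bX := (F X).2 with hbXdef
  set aY := (F Y).1 with haYdef
  set bY := (F Y).2 with hbYdef
  have haXKc : aX ∈ Kc := by rw [haX]; exact ⟨xPX, hxPX.2, rfl⟩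
  have haYKc : aY ∈ Kc := by rw [haY]; exact ⟨xPY, hxPY.2, rfl⟩
  have hbXclU : bX ∈ closure U :=
    closure_mono (Set.image_mono ((h𝒳.sub X hX.1).trans hCsub)) hbXcl
  have hbYclU : bY ∈ closure U :=
    closure_mono (Set.image_mono ((h𝒳.sub Y hY.1).trans hCsub)) hbYcl
  have hdistab : dist aX aY < η ∧ dist bX bY < η := by
    rw [Prod.dist_eq] at hFd
    exact ⟨lt_of_le_of_lt (le_max_left _ _) hFd, lt_of_le_of_lt (le_max_right _ _) hFd⟩
  -- the far points
  set pX : Vd d := aX + tstar • (bX - aX) with hpXdef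
  set pY : Vd d := aY + tstar • (bY - aY) with hpYdef
  have hpXU : pX ∈ U := by
    rw [hpXdef, comboEq]
    have := hdeep aX bX haXKc hbXclU tstar (le_of_lt hts0) le_rfl 0 (map_zero f)
      (by rw [norm_zero]; exact le_of_lt hδ0)
    simpa using this
  have hpYU : pY ∈ U := by
    rw [hpYdef, comboEq]
    have := hdeep aY bY haYKc hbYclU tstar (le_of_lt hts0) le_rfl 0 (map_zero f)
      (by rw [norm_zero]; exact le_of_lt hδ0)
    simpa using this
  -- mk of far points lie in X resp Y
  have hmkmem : ∀ (Z : Set (Proj d)), Z ∈ 𝒳 → ∀ a b p : Vd d, a ∈ pchart f '' Z →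
      b ∈ closure (pchart f '' Z) → p ∈ U → p = a + tstar • (b - a) → mkT x₀ p ∈ Z := by
    intro Z hZ a b p haZ hbZ hpU hpeq
    have hfp : f p = 1 := hU1 p hpU
    have hp0 : p ≠ 0 := by intro hp; rw [hp, map_zero] at hfp; norm_num at hfp
    have hconvZ : Convex ℝ (closure (pchart f '' Z)) := (h𝒳.convex Z hZ).closure
    have hpcl : p ∈ closure (pchart f '' Z) := by
      rw [hpeq, comboEq]
      exact hconvZ (subset_closure haZ) hbZ (by linarith) (le_of_lt hts0) (by ring)
    have hcat : ContinuousAt (mkT x₀) p :=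
      (continuousOn_mkT x₀).continuousAt (IsOpen.mem_nhds isOpen_compl_singleton hp0)
    have hmkcl : mkT x₀ p ∈ closure (mkT x₀ '' (pchart f '' Z)) :=
      hcat.continuousWithinAt.mem_closure_image hpcl
    have himg : mkT x₀ '' (pchart f '' Z) ⊆ Z := by
      rintro _ ⟨_, ⟨Q, hQ, rfl⟩, rfl⟩
      have hQΩ : Q ∈ Ω := hCsub (h𝒳.sub Z hZ hQ)
      have hQ0 : pchart f Q ≠ 0 := pchart_ne_zero f Q (hok Q hQΩ)
      rw [mkT_eq x₀ hQ0, mk_pchart f Q (hok Q hQΩ) hQ0]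
      exact hQ
    have hclX : mkT x₀ p ∈ closure Z := closure_mono himg hmkcl
    have hpΩ : mkT x₀ p ∈ Ω := by
      obtain ⟨h1, hu, hmem⟩ := (mem_chart_iff f hok p).mp hpU
      rw [mkT_eq x₀ hp0]
      exact hmem
    exact h𝒳.closedIn Z hZ ⟨hclX, hpΩ⟩
  have hchartX : aX ∈ pchart f '' X := by rw [haX]; exact ⟨xPX, hxPX.1, rfl⟩
  have hchartY : aY ∈ pchart f '' Y := by rw [haY]; exact ⟨xPY, hxPY.1, rfl⟩
  have hQXmem : mkT x₀ pX ∈ X := hmkmem X hX.1 aX bX pX hchartX hbXcl hpXU rfl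
  have hQYmem : mkT x₀ pY ∈ Y := hmkmem Y hY.1 aY bY pY hchartY hbYcl hpYU rfl
  -- chart values of the four projective points
  have hdist_eq : ∀ x y : Proj d, hdist f Ω x y = affHilbertDist U (pchart f x) (pchart f y) :=
    fun _ _ => rfl
  have hfpX : f pX = 1 := hU1 pX hpXU
  have hfpY : f pY = 1 := hU1 pY hpYU
  have hpX0 : pX ≠ 0 := by intro hp; rw [hp, map_zero] at hfpX; norm_num at hfpX
  have hpY0 : pY ≠ 0 := by intro hp; rw [hp, map_zero] at hfpY; norm_num at hfpY
  have hchQX : pchart f (mkT x₀ pX) = pX := by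
    rw [mkT_eq x₀ hpX0]; exact pchart_mk_of_one f hpX0 hfpX
  have hchQY : pchart f (mkT x₀ pY) = pY := by
    rw [mkT_eq x₀ hpY0]; exact pchart_mk_of_one f hpY0 hfpY
  have hchPX : pchart f xPX = aX := haX.symm
  have hchPY : pchart f xPY = aY := haY.symm
  -- deepness of the four chart points
  have hdeeppX : ∀ v : Vd d, f v = 0 → ‖v‖ ≤ δ → pX + v ∈ closure U := by
    intro v h1 h2
    rw [hpXdef, comboEq]
    exact subset_closure (hdeep aX bX haXKc hbXclU tstar (le_of_lt hts0) le_rfl v h1 h2)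
  have hdeeppY : ∀ v : Vd d, f v = 0 → ‖v‖ ≤ δ → pY + v ∈ closure U := by
    intro v h1 h2
    rw [hpYdef, comboEq]
    exact subset_closure (hdeep aY bY haYKc hbYclU tstar (le_of_lt hts0) le_rfl v h1 h2)
  -- distances
  have hfaX : f aX = 1 := hU1 aX (hKcU haXKc)
  have hfaY : f aY = 1 := hU1 aY (hKcU haYKc)
  have hdPP : affHilbertDist U aX aY < 1 := by
    have key := affH_le f hUb hδ0 (hdeepa aX haXKc) (hdeepa aY haYKc) hfaX hfaY
    have hn : ‖aY - aX‖ < η := by rw [← dist_eq_norm, dist_comm]; exact hdistab.1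
    have : ‖aY - aX‖ / δ < 1 := by
      rw [div_lt_one hδ0]
      rw [hηdef] at hn
      linarith
    linarith
  have hdQQ : affHilbertDist U pX pY < 1 := by
    have key := affH_le f hUb hδ0 hdeeppX hdeeppY hfpX hfpY
    have hdiff : pY - pX = (1 - tstar) • (aY - aX) + tstar • (bY - bX) := by
      rw [hpXdef, hpYdef]
      exact diffEq aX bX aY bY tstar
    have hn : ‖pY - pX‖ < 2 * η := by
      rw [hdiff]
      calc ‖(1 - tstar) • (aY - aX) + tstar • (bY - bX)‖
          ≤ ‖(1 - tstar) • (aY - aX)‖ + ‖tstar • (bY - bX)‖ := norm_add_le _ _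
        _ = (1 - tstar) * ‖aY - aX‖ + tstar * ‖bY - bX‖ := by
            rw [norm_smul, norm_smul, Real.norm_eq_abs, Real.norm_eq_abs,
              abs_of_pos h1ts, abs_of_pos hts0]
        _ < 2 * η := by
            have h1 : ‖aY - aX‖ < η := by rw [← dist_eq_norm, dist_comm]; exact hdistab.1
            have h2 : ‖bY - bX‖ < η := by rw [← dist_eq_norm, dist_comm]; exact hdistab.2
            nlinarith [norm_nonneg (aY - aX), norm_nonneg (bY - bX)]
    have : ‖pY - pX‖ / δ < 1 := by
      rw [div_lt_one hδ0]
      rw [hηdef] at hn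
      linarith
    linarith
  -- memberships in the 1-neighborhoods
  have hxPXΩ : xPX ∈ Ω := hCsub (hK hxPX.2)
  have hQXΩ : mkT x₀ pX ∈ Ω := hCsub (h𝒳.sub X hX.1 hQXmem)
  have hself : ∀ P : Proj d, hdist f Ω P P = 0 := by
    intro P
    rw [hdist_eq, affHilbertDist, if_pos rfl]
  have hmem1 : xPX ∈ hnbhd f Ω X 1 :=
    ⟨hxPXΩ, xPX, hxPX.1, by rw [hself]; norm_num⟩
  have hmem2 : mkT x₀ pX ∈ hnbhd f Ω X 1 :=
    ⟨hQXΩ, mkT x₀ pX, hQXmem, by rw [hself]; norm_num⟩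
  have hmem3 : xPX ∈ hnbhd f Ω Y 1 := by
    refine ⟨hxPXΩ, xPY, hxPY.1, ?_⟩
    rw [hdist_eq, hchPX, hchPY]
    exact hdPP
  have hmem4 : mkT x₀ pX ∈ hnbhd f Ω Y 1 := by
    refine ⟨hQXΩ, mkT x₀ pY, hQYmem, ?_⟩
    rw [hdist_eq, hchQX, hchQY]
    exact hdQQ
  -- the contradiction
  have hfar := affH_ge f hUb hUconv hU1 hopen (hKcU haXKc) hbXclU hbXU hts0 hts1
  have hlog : (1/2) * Real.log (1/(1-tstar)) = D + 1 := by
    have h1 : (1:ℝ)/(1 - tstar) = Real.exp (2*D+2) := by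
      rw [htsdef]
      rw [show (1:ℝ) - (1 - Real.exp (-(2*D+2))) = Real.exp (-(2*D+2)) by ring]
      rw [Real.exp_neg]
      rw [one_div, inv_inv]
    rw [h1, Real.log_exp]
    ring
  have hbound := hDiam X hX.1 Y hY.1 hXY xPX ⟨hmem1, hmem3⟩ (mkT x₀ pX) ⟨hmem2, hmem4⟩
  rw [hdist_eq, hchPX, hchQX] at hbound
  rw [hlog] at hfar
  have : affHilbertDist U aX pX ≤ D := hbound
  linarith
end
end

section
/- Let (Omega, C, Gamma) be a naive convex co-compact triple and let X be a Gamma-invariant, strongly isolated collection of closed unbounded convex subsets of C. Then Gamma has only finitely many orbits in X, i.e., there exist X_1,...,X_m in X with X equal to the disjoint union of the Gamma-orbits of X_1,...,X_m. -/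
open Set Filter Topology

noncomputable section

variable {d : ℕ}

namespace Aux



lemma pchart_fone (f : Vd d →ₗ[ℝ] ℝ) {x : Proj d} (hx : f x.rep ≠ 0) : f (pchart f x) = 1 := by
  simp [pchart, map_smul, smul_eq_mul, inv_mul_cancel₀ hx]

lemma pchart_ne_zero (f : Vd d →ₗ[ℝ] ℝ) {x : Proj d} (hx : f x.rep ≠ 0) : pchart f x ≠ 0 := by
  intro h
  have := pchart_fone f hx
  rw [h] at this; simp at this

lemma pchart_mk' (f : Vd d →ₗ[ℝ] ℝ) {w : Vd d} (hw : w ≠ 0) (hfw : f w ≠ 0) :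
    pchart f (Projectivization.mk ℝ w hw) = (f w)⁻¹ • w := by
  obtain ⟨a, ha⟩ := (Projectivization.mk_eq_mk_iff ℝ _ _ (Projectivization.rep_nonzero _) hw).mp
    (Projectivization.mk_rep (Projectivization.mk ℝ w hw))
  have ha' : (Projectivization.mk ℝ w hw).rep = (a : ℝ) • w := by rw [← ha]; rfl
  rw [pchart, ha']
  rw [map_smul, smul_eq_mul, smul_smul]
  have : (a:ℝ) ≠ 0 := a.ne_zero
  congr 1
  field_simp

lemma pchart_mk (f : Vd d →ₗ[ℝ] ℝ) {w : Vd d} (hw : w ≠ 0) (h1 : f w = 1) :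
    pchart f (Projectivization.mk ℝ w hw) = w := by
  rw [pchart_mk' f hw (by rw [h1]; norm_num), h1]; simp

lemma mk_pchart (f : Vd d →ₗ[ℝ] ℝ) {x : Proj d} (hx : f x.rep ≠ 0) :
    Projectivization.mk ℝ (pchart f x) (pchart_ne_zero f hx) = x := by
  conv_rhs => rw [← Projectivization.mk_rep x]
  rw [Projectivization.mk_eq_mk_iff]
  exact ⟨Units.mk0 (f x.rep)⁻¹ (inv_ne_zero hx), by simp [pchart]⟩


/-- `WS f Ω` : the closed chart image. -/
def WS (f : Vd d →ₗ[ℝ] ℝ) (Ω : Set (Proj d)) : Set (Vd d) := closure (pchart f '' Ω)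

/-- good points at scale ε -/
def GS (f : Vd d →ₗ[ℝ] ℝ) (Ω : Set (Proj d)) (ε : ℝ) : Set (Vd d) :=
  {w | f w = 1 ∧ ∀ y, f y = 1 → ‖y - w‖ ≤ ε → y ∈ WS f Ω}

variable {f : Vd d →ₗ[ℝ] ℝ} {Ω : Set (Proj d)}

lemma GS_subset_W {ε : ℝ} (hε : 0 ≤ ε) {w : Vd d} (hw : w ∈ GS f Ω ε) : w ∈ WS f Ω :=
  hw.2 w hw.1 (by simp [hε])

lemma GS_mono {ε ε' : ℝ} (h : ε' ≤ ε) : GS f Ω ε ⊆ GS f Ω ε' :=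
  fun w hw => ⟨hw.1, fun y hy hn => hw.2 y hy (hn.trans h)⟩

lemma GS_closed (ε : ℝ) : IsClosed (GS f Ω ε) := by
  have hf : Continuous f := f.continuous_of_finiteDimensional
  refine IsSeqClosed.isClosed ?_
  intro u w hu hw
  have hfw : f w = 1 := by
    have h2 : Filter.Tendsto (fun n => f (u n)) Filter.atTop (nhds (f w)) :=
      (hf.tendsto w).comp hw
    have h1 : (fun n => f (u n)) = fun _ => (1:ℝ) := funext fun n => (hu n).1
    rw [h1] at h2
    exact (tendsto_const_nhds_iff.mp h2).symm
  constructor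
  · exact hfw
  · intro y hy hn
    have hmem : ∀ n, y + (u n - w) ∈ WS f Ω := by
      intro n
      refine (hu n).2 _ ?_ ?_
      · rw [map_add, map_sub, hy, (hu n).1, hfw]; ring
      · have : y + (u n - w) - u n = y - w := by abel
        rw [this]; exact hn
    have hlim : Filter.Tendsto (fun n => y + (u n - w)) Filter.atTop (nhds y) := by
      have : Filter.Tendsto (fun n => y + (u n - w)) Filter.atTop (nhds (y + (w - w))) :=
        tendsto_const_nhds.add (hw.sub tendsto_const_nhds)
      simpa using this
    exact isClosed_closure.mem_of_tendsto hlim (Filter.Eventually.of_forall hmem)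


variable {f : Vd d →ₗ[ℝ] ℝ} {Ω : Set (Proj d)}

lemma segSet_eq (p q : Vd d) : segSet (pchart f '' Ω) p q = {t : ℝ | p + t • (q - p) ∈ WS f Ω} :=
  rfl

lemma fun_GS_mono {ε ε' : ℝ} (h : ε' ≤ ε) : ∀ {w}, w ∈ GS f Ω ε → w ∈ GS f Ω ε' :=
  fun hw => ⟨hw.1, fun y hy hn => hw.2 y hy (hn.trans h)⟩

lemma core_bounds {B : ℝ} (hB : ∀ w ∈ WS f Ω, ‖w‖ ≤ B) {p q : Vd d}
    (hp1 : f p = 1) (hq1 : f q = 1) (hne : p ≠ q)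
    {εp εq : ℝ} (hεp : 0 < εp) (hεq : 0 < εq)
    (hp : ∀ y, f y = 1 → ‖y - p‖ ≤ εp → y ∈ WS f Ω)
    (hq : ∀ y, f y = 1 → ‖y - q‖ ≤ εq → y ∈ WS f Ω) :
    (segSet (pchart f '' Ω) p q).Nonempty ∧
    1 + εq / ‖q - p‖ ≤ sSup (segSet (pchart f '' Ω) p q) ∧
    sInf (segSet (pchart f '' Ω) p q) ≤ -(εp / ‖q - p‖) ∧
    affHilbertDist (pchart f '' Ω) p q =
      1/2 * (Real.log (1 + 1/(sSup (segSet (pchart f '' Ω) p q) - 1)) +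
             Real.log (1 + 1/(-(sInf (segSet (pchart f '' Ω) p q))))) := by
  set S := segSet (pchart f '' Ω) p q with hS
  have hΔ : 0 < ‖q - p‖ := norm_pos_iff.mpr (sub_ne_zero_of_ne (Ne.symm hne))
  have hΔ' : ‖q - p‖ ≠ 0 := ne_of_gt hΔ
  have hxt1 : ∀ t : ℝ, f (p + t • (q - p)) = 1 := by
    intro t
    simp [map_add, map_smul, map_sub, hp1, hq1, smul_eq_mul]
  have hsubq : ∀ t : ℝ, p + t • (q - p) - q = (t - 1) • (q - p) := by
    intro t; funext i
    simp [Pi.smul_apply, smul_eq_mul, Pi.sub_apply, Pi.add_apply]; ring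
  have hsubp : ∀ t : ℝ, p + t • (q - p) - p = t • (q - p) := by
    intro t; funext i
    simp [Pi.smul_apply, smul_eq_mul, Pi.sub_apply, Pi.add_apply]
  have memq : ∀ t : ℝ, |t - 1| * ‖q - p‖ ≤ εq → t ∈ S := by
    intro t ht
    refine hq _ (hxt1 t) ?_
    rw [hsubq, norm_smul, Real.norm_eq_abs]; exact ht
  have memp : ∀ t : ℝ, |t| * ‖q - p‖ ≤ εp → t ∈ S := by
    intro t ht
    refine hp _ (hxt1 t) ?_
    rw [hsubp, norm_smul, Real.norm_eq_abs]; exact ht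
  have mem0 : (0:ℝ) ∈ S := memp 0 (by simp [le_of_lt hεp])
  have memT : 1 + εq / ‖q - p‖ ∈ S := by
    refine memq _ ?_
    have : |1 + εq / ‖q - p‖ - 1| = εq / ‖q - p‖ := by
      rw [add_sub_cancel_left, abs_of_pos (div_pos hεq hΔ)]
    rw [this, div_mul_cancel₀ _ hΔ']
  have memB : -(εp / ‖q - p‖) ∈ S := by
    refine memp _ ?_
    have : |-(εp / ‖q - p‖)| = εp / ‖q - p‖ := by
      rw [abs_neg, abs_of_pos (div_pos hεp hΔ)]
    rw [this, div_mul_cancel₀ _ hΔ']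
  have hub : BddAbove S := by
    refine ⟨(B + ‖p‖) / ‖q - p‖, fun t ht => ?_⟩
    have h1 : ‖p + t • (q - p)‖ ≤ B := hB _ ht
    have h2 : ‖t • (q - p)‖ ≤ B + ‖p‖ := by
      calc ‖t • (q - p)‖ = ‖p + t • (q - p) - p‖ := by rw [hsubp]
        _ ≤ ‖p + t • (q - p)‖ + ‖p‖ := norm_sub_le _ _
        _ ≤ B + ‖p‖ := by linarith
    rw [norm_smul, Real.norm_eq_abs] at h2
    have : |t| ≤ (B + ‖p‖) / ‖q - p‖ := by
      rw [le_div_iff₀ hΔ]; exact h2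
    exact le_trans (le_abs_self t) this
  have hlb : BddBelow S := by
    refine ⟨-((B + ‖p‖) / ‖q - p‖), fun t ht => ?_⟩
    have h1 : ‖p + t • (q - p)‖ ≤ B := hB _ ht
    have h2 : ‖t • (q - p)‖ ≤ B + ‖p‖ := by
      calc ‖t • (q - p)‖ = ‖p + t • (q - p) - p‖ := by rw [hsubp]
        _ ≤ ‖p + t • (q - p)‖ + ‖p‖ := norm_sub_le _ _
        _ ≤ B + ‖p‖ := by linarith
    rw [norm_smul, Real.norm_eq_abs] at h2
    have h3 : |t| ≤ (B + ‖p‖) / ‖q - p‖ := by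
      rw [le_div_iff₀ hΔ]; exact h2
    have := neg_abs_le t
    linarith
  have hs1 : 1 + εq / ‖q - p‖ ≤ sSup S := le_csSup hub memT
  have hr1 : sInf S ≤ -(εp / ‖q - p‖) := csInf_le hlb memB
  have hεqΔ : 0 < εq / ‖q - p‖ := div_pos hεq hΔ
  have hεpΔ : 0 < εp / ‖q - p‖ := div_pos hεp hΔ
  have hslt : 1 < sSup S := by linarith
  have hrlt : sInf S < 0 := by linarith
  refine ⟨⟨0, mem0⟩, hs1, hr1, ?_⟩
  rw [affHilbertDist, if_neg hne]
  have hsm : sSup S - 1 ≠ 0 := by linarith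
  have hrm : -(sInf S) ≠ 0 := by linarith
  have hA : 0 < 1 + 1/(sSup S - 1) := by
    have : 0 < 1/(sSup S - 1) := by apply one_div_pos.mpr; linarith
    linarith
  have hBpos : 0 < 1 + 1/(-(sInf S)) := by
    have : 0 < 1/(-(sInf S)) := by apply one_div_pos.mpr; linarith
    linarith
  have harg : (sSup S * (1 - sInf S)) / ((sSup S - 1) * (- sInf S)) =
      (1 + 1/(sSup S - 1)) * (1 + 1/(-(sInf S))) := by
    field_simp
    have hr0 : sInf S ≠ 0 := by linarith
    field_simp
    ring
  rw [harg, Real.log_mul (ne_of_gt hA) (ne_of_gt hBpos)]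

lemma aff_lip {B : ℝ} (hB : ∀ w ∈ WS f Ω, ‖w‖ ≤ B) {ε : ℝ} (hε : 0 < ε) {p q : Vd d}
    (hp : p ∈ GS f Ω ε) (hq : q ∈ GS f Ω ε) :
    affHilbertDist (pchart f '' Ω) p q ≤ ‖q - p‖ / ε := by
  by_cases hne : p = q
  · rw [affHilbertDist, if_pos hne]
    positivity
  obtain ⟨-, hs1, hr1, hform⟩ := core_bounds hB hp.1 hq.1 hne hε hε hp.2 hq.2
  set S := segSet (pchart f '' Ω) p q
  have hΔ : 0 < ‖q - p‖ := norm_pos_iff.mpr (sub_ne_zero_of_ne (Ne.symm hne))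
  have h1 : ε / ‖q - p‖ ≤ sSup S - 1 := by linarith
  have h2 : ε / ‖q - p‖ ≤ -(sInf S) := by linarith
  have hεΔ : 0 < ε / ‖q - p‖ := div_pos hε hΔ
  have hspos : 0 < sSup S - 1 := by linarith
  have hrpos : 0 < -(sInf S) := by linarith
  have l1 : Real.log (1 + 1/(sSup S - 1)) ≤ ‖q - p‖ / ε := by
    have := Real.log_le_sub_one_of_pos (x := 1 + 1/(sSup S - 1))
      (by have := one_div_pos.mpr hspos; linarith)
    have h3 : 1/(sSup S - 1) ≤ 1/(ε / ‖q - p‖) := by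
      apply one_div_le_one_div_of_le hεΔ h1
    rw [one_div_div] at h3
    linarith
  have l2 : Real.log (1 + 1/(-(sInf S))) ≤ ‖q - p‖ / ε := by
    have := Real.log_le_sub_one_of_pos (x := 1 + 1/(-(sInf S)))
      (by have := one_div_pos.mpr hrpos; linarith)
    have h3 : 1/(-(sInf S)) ≤ 1/(ε / ‖q - p‖) := by
      apply one_div_le_one_div_of_le hεΔ h2
    rw [one_div_div] at h3
    linarith
  rw [hform]
  linarith

noncomputable def lam (R : ℝ) : ℝ :=
  (min (1/(Real.exp (2*R) - 1)) 1 / 2) / (1 + min (1/(Real.exp (2*R) - 1)) 1 / 2)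

lemma lam_facts {R : ℝ} (hR : 0 < R) : 0 < lam R ∧ lam R < 1 := by
  have hE : 0 < Real.exp (2*R) - 1 := by
    have : (1:ℝ) = Real.exp 0 := (Real.exp_zero).symm
    have h2 : Real.exp 0 < Real.exp (2*R) := Real.exp_lt_exp.mpr (by linarith)
    rw [Real.exp_zero] at h2
    linarith
  have hu : 0 < min (1/(Real.exp (2*R) - 1)) 1 := lt_min (by positivity) one_pos
  rw [lam]
  constructor
  · apply div_pos (by linarith) (by linarith)
  · rw [div_lt_one (by linarith)]
    linarith

lemma lemP {B : ℝ} (hconv : Convex ℝ (WS f Ω)) (hB : ∀ w ∈ WS f Ω, ‖w‖ ≤ B)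
    {ρ R : ℝ} (hρ : 0 < ρ) (hR : 0 < R) {p q : Vd d}
    (hp : p ∈ GS f Ω ρ) (hq1 : f q = 1)
    (hqo : ∃ εq > 0, ∀ y, f y = 1 → ‖y - q‖ ≤ εq → y ∈ WS f Ω)
    (hd : affHilbertDist (pchart f '' Ω) p q ≤ R) :
    q ∈ GS f Ω (lam R * ρ) := by
  obtain ⟨hlam0, hlam1⟩ := lam_facts hR
  by_cases hne : p = q
  · subst hne
    exact fun_GS_mono (by nlinarith) hp
  obtain ⟨εq, hεq, hqball⟩ := hqo
  obtain ⟨hSne, hs1, hr1, hform⟩ := core_bounds hB hp.1 hq1 hne hρ hεq hp.2 hqball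
  set S := segSet (pchart f '' Ω) p q with hSdef
  have hΔ : 0 < ‖q - p‖ := norm_pos_iff.mpr (sub_ne_zero_of_ne (Ne.symm hne))
  have hεqΔ : 0 < εq / ‖q - p‖ := div_pos hεq hΔ
  have hρΔ : 0 < ρ / ‖q - p‖ := div_pos hρ hΔ
  have hspos : 0 < sSup S - 1 := by linarith
  have hrpos : 0 < -(sInf S) := by linarith
  -- extract the bound on s
  have hE : 0 < Real.exp (2*R) - 1 := by
    have h2 : Real.exp 0 < Real.exp (2*R) := Real.exp_lt_exp.mpr (by linarith)
    rw [Real.exp_zero] at h2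
    linarith
  set u := min (1/(Real.exp (2*R) - 1)) 1 with hudef
  have hu0 : 0 < u := lt_min (by positivity) one_pos
  have huE : u ≤ 1/(Real.exp (2*R) - 1) := min_le_left _ _
  have hlogB : 0 ≤ Real.log (1 + 1/(-(sInf S))) :=
    Real.log_nonneg (by have := one_div_pos.mpr hrpos; linarith)
  have hlogA : Real.log (1 + 1/(sSup S - 1)) ≤ 2*R := by
    rw [hform] at hd
    linarith
  have hAle : 1 + 1/(sSup S - 1) ≤ Real.exp (2*R) := by
    have h0 : 0 < 1 + 1/(sSup S - 1) := by have := one_div_pos.mpr hspos; linarith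
    calc 1 + 1/(sSup S - 1) = Real.exp (Real.log (1 + 1/(sSup S - 1))) :=
          (Real.exp_log h0).symm
      _ ≤ Real.exp (2*R) := Real.exp_le_exp.mpr hlogA
  have hsE : 1/(Real.exp (2*R) - 1) ≤ sSup S - 1 := by
    have h1 : 1/(sSup S - 1) ≤ Real.exp (2*R) - 1 := by linarith
    have := one_div_le_one_div_of_le (by positivity) h1
    rwa [one_div_one_div] at this
  have hsu : 1 + u ≤ sSup S := by linarith [le_trans huE hsE]
  set t := 1 + u/2 with htdef
  have ht1 : 1 < t := by rw [htdef]; linarith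
  have htpos : 0 < t := by linarith
  have hts : t < sSup S := by rw [htdef]; linarith
  -- S is convex
  have hSconv : Convex ℝ S := by
    intro t1 h1 t2 h2 a b ha hb hab
    have key : p + (a • t1 + b • t2) • (q - p) =
        a • (p + t1 • (q - p)) + b • (p + t2 • (q - p)) := by
      funext i
      simp only [Pi.add_apply, Pi.smul_apply, Pi.sub_apply, smul_eq_mul]
      have hb' : b = 1 - a := by linarith
      subst hb'
      ring
    show p + (a • t1 + b • t2) • (q - p) ∈ WS f Ω
    rw [key]
    exact hconv h1 h2 ha hb hab
  -- t ∈ S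
  have htS : t ∈ S := by
    obtain ⟨t2, ht2S, ht2⟩ := exists_lt_of_lt_csSup hSne hts
    have ht2pos : 0 < t2 := lt_trans htpos ht2
    have mem0 : (0:ℝ) ∈ S := by
      show p + (0:ℝ) • (q - p) ∈ WS f Ω
      have : p + (0:ℝ) • (q - p) = p := by funext i; simp
      rw [this]
      exact hp.2 p hp.1 (by simp; linarith)
    have := hSconv mem0 ht2S (a := 1 - t/t2) (b := t/t2)
      (by rw [sub_nonneg, div_le_one ht2pos]; linarith)
      (by positivity) (by ring)
    have heq : (1 - t/t2) • (0:ℝ) + (t/t2) • t2 = t := by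
      rw [smul_zero, zero_add, smul_eq_mul, div_mul_cancel₀ _ (ne_of_gt ht2pos)]
    rwa [heq] at this
  have hz : p + t • (q - p) ∈ WS f Ω := htS
  -- main ball property
  have hlam_eq : lam R = (t - 1)/t := by
    rw [lam, htdef, hudef]
    ring_nf
  refine ⟨hq1, fun y hy hny => ?_⟩
  have htm : t - 1 ≠ 0 := by linarith
  have htn : t ≠ 0 := by linarith
  set p' := p + (t/(t-1)) • (y - q) with hp'def
  have hp'1 : f p' = 1 := by
    simp [hp'def, map_add, map_smul, map_sub, hy, hq1, hp.1, smul_eq_mul]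
  have hp'W : p' ∈ WS f Ω := by
    refine hp.2 p' hp'1 ?_
    have : p' - p = (t/(t-1)) • (y - q) := by funext i; simp [hp'def]
    rw [this, norm_smul, Real.norm_eq_abs]
    have htt : 0 < t/(t-1) := div_pos htpos (by linarith)
    rw [abs_of_pos htt]
    rw [hlam_eq] at hny
    calc t/(t-1) * ‖y - q‖ ≤ t/(t-1) * ((t-1)/t * ρ) := by
          apply mul_le_mul_of_nonneg_left hny (le_of_lt htt)
      _ = ρ := by field_simp
  have hkey : y = ((t-1)/t) • p' + (1/t) • (p + t • (q - p)) := by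
    funext i
    simp only [hp'def, Pi.add_apply, Pi.smul_apply, Pi.sub_apply, smul_eq_mul]
    field_simp
    ring
  rw [hkey]
  exact hconv hp'W hz (div_nonneg (by linarith) (by linarith))
    (le_of_lt (div_pos one_pos htpos)) (by field_simp; ring)


/-! ### Topology of the chart -/

def qmk : {v : Vd d // v ≠ 0} → Proj d := fun v => Projectivization.mk ℝ v.1 v.2

lemma qmk_continuous : Continuous (qmk (d := d)) := continuous_quot_mk

lemma qmk_quotientMap : Topology.IsQuotientMap (qmk (d := d)) := isQuotientMap_quot_mk

lemma rep_unit (v : {v : Vd d // v ≠ 0}) : ∃ a : ℝˣ, (qmk v).rep = (a : ℝ) • v.1 := by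
  obtain ⟨a, ha⟩ := (Projectivization.mk_eq_mk_iff ℝ (qmk v).rep v.1
    (Projectivization.rep_nonzero _) v.2).mp (Projectivization.mk_rep (qmk v))
  exact ⟨a, ha.symm⟩

def O2 (Ω : Set (Proj d)) : Set (Vd d) :=
  {w : Vd d | ∃ h : w ≠ 0, Projectivization.mk ℝ w h ∈ Ω}

lemma O2_open (hΩo : IsOpen Ω) : IsOpen (O2 Ω) := by
  have h1 : IsOpen {v : Vd d | v ≠ 0} := isOpen_compl_singleton
  have h2 : IsOpen (qmk ⁻¹' Ω : Set {v : Vd d // v ≠ 0}) := hΩo.preimage qmk_continuous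
  have h3 : O2 Ω = Subtype.val '' (qmk ⁻¹' Ω : Set {v : Vd d // v ≠ 0}) := by
    ext w
    constructor
    · rintro ⟨hw, hmem⟩
      exact ⟨⟨w, hw⟩, hmem, rfl⟩
    · rintro ⟨⟨w', hw'⟩, hmem, rfl⟩
      exact ⟨hw', hmem⟩
  rw [h3]
  exact h1.isOpenMap_subtype_val _ h2

lemma mem_chart_iff (hOK : ∀ x ∈ closure Ω, f x.rep ≠ 0) {w : Vd d} :
    w ∈ pchart f '' Ω ↔ (f w = 1 ∧ w ∈ O2 Ω) := by
  constructor
  · rintro ⟨x, hx, rfl⟩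
    have hfx : f x.rep ≠ 0 := hOK x (subset_closure hx)
    refine ⟨pchart_fone f hfx, pchart_ne_zero f hfx, ?_⟩
    rw [mk_pchart f hfx]
    exact hx
  · rintro ⟨h1, hw, hmem⟩
    exact ⟨Projectivization.mk ℝ w hw, hmem, pchart_mk f hw h1⟩

lemma chart_open (hΩo : IsOpen Ω) (hOK : ∀ x ∈ closure Ω, f x.rep ≠ 0) {q : Vd d}
    (hq : q ∈ pchart f '' Ω) :
    ∃ ε > 0, ∀ y, f y = 1 → ‖y - q‖ ≤ ε → y ∈ pchart f '' Ω := by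
  obtain ⟨hq1, hqO⟩ := (mem_chart_iff hOK).mp hq
  obtain ⟨δ, hδ, hball⟩ := Metric.isOpen_iff.mp (O2_open hΩo) q hqO
  refine ⟨δ/2, by linarith, fun y hy hn => ?_⟩
  refine (mem_chart_iff hOK).mpr ⟨hy, hball ?_⟩
  rw [Metric.mem_ball, dist_eq_norm]
  linarith

lemma nbhd_open (hΩo : IsOpen Ω) (c : Vd d) (ε : ℝ) :
    IsOpen {x : Proj d | f x.rep ≠ 0 ∧ x ∈ Ω ∧ ‖pchart f x - c‖ < ε} := by
  rw [← qmk_quotientMap.isOpen_preimage]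
  have hpre : qmk ⁻¹' {x : Proj d | f x.rep ≠ 0 ∧ x ∈ Ω ∧ ‖pchart f x - c‖ < ε} =
      ({v : {v : Vd d // v ≠ 0} | f v.1 ≠ 0} ∩
        (fun v : {v : Vd d // v ≠ 0} => ‖(f v.1)⁻¹ • v.1 - c‖) ⁻¹' Iio ε) ∩ qmk ⁻¹' Ω := by
    ext v
    simp only [mem_preimage, mem_setOf_eq, mem_inter_iff, mem_Iio]
    constructor
    · rintro ⟨h1, h2, h3⟩
      obtain ⟨a, ha⟩ := rep_unit v
      have hfv : f v.1 ≠ 0 := by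
        intro h0
        rw [ha, map_smul, smul_eq_mul, h0, mul_zero] at h1
        exact h1 rfl
      refine ⟨⟨hfv, ?_⟩, h2⟩
      rwa [show pchart f (qmk v) = (f v.1)⁻¹ • v.1 from pchart_mk' f v.2 hfv] at h3
    · rintro ⟨⟨hfv, h3⟩, h2⟩
      obtain ⟨a, ha⟩ := rep_unit v
      have h1 : f (qmk v).rep ≠ 0 := by
        rw [ha, map_smul, smul_eq_mul]
        exact mul_ne_zero a.ne_zero hfv
      refine ⟨h1, h2, ?_⟩
      rwa [show pchart f (qmk v) = (f v.1)⁻¹ • v.1 from pchart_mk' f v.2 hfv]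
  rw [hpre]
  have hf : Continuous f := f.continuous_of_finiteDimensional
  have hS1 : IsOpen {v : {v : Vd d // v ≠ 0} | f v.1 ≠ 0} := by
    have : Continuous (fun v : {v : Vd d // v ≠ 0} => f v.1) :=
      hf.comp continuous_subtype_val
    exact isOpen_compl_singleton.preimage this
  have hcont : ContinuousOn (fun v : {v : Vd d // v ≠ 0} => ‖(f v.1)⁻¹ • v.1 - c‖)
      {v : {v : Vd d // v ≠ 0} | f v.1 ≠ 0} := by
    have c1 : ContinuousOn (fun v : {v : Vd d // v ≠ 0} => f v.1)
        {v : {v : Vd d // v ≠ 0} | f v.1 ≠ 0} := (hf.comp continuous_subtype_val).continuousOn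
    have c2 := c1.inv₀ (fun v hv => hv)
    have c3 : ContinuousOn (fun v : {v : Vd d // v ≠ 0} => (f v.1)⁻¹ • v.1)
        {v : {v : Vd d // v ≠ 0} | f v.1 ≠ 0} := c2.smul continuous_subtype_val.continuousOn
    exact (c3.sub continuousOn_const).norm
  exact ((hcont.isOpen_inter_preimage hS1 isOpen_Iio)).inter (hΩo.preimage qmk_continuous)

lemma exists_rho (hΩo : IsOpen Ω) (hOK : ∀ x ∈ closure Ω, f x.rep ≠ 0)
    {K : Set (Proj d)} (hK : IsCompact K) (hKne : K.Nonempty) (hKΩ : K ⊆ Ω) :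
    ∃ ρ > 0, ∀ w ∈ pchart f '' K, ∀ y, f y = 1 → ‖y - w‖ ≤ ρ → y ∈ pchart f '' Ω := by
  have hrep : ∀ k : Proj d, k ∈ K → f k.rep ≠ 0 := fun k hk =>
    hOK k (subset_closure (hKΩ hk))
  have hch : ∀ k : ↥K, pchart f k.1 ∈ pchart f '' Ω := fun k => ⟨k.1, hKΩ k.2, rfl⟩
  choose ε' hε'pos hε'ball using fun k : ↥K => chart_open hΩo hOK (hch k)
  set U : ↥K → Set (Proj d) := fun k =>
    {x : Proj d | f x.rep ≠ 0 ∧ x ∈ Ω ∧ ‖pchart f x - pchart f k.1‖ < ε' k / 2} with hU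
  have hUopen : ∀ k, IsOpen (U k) := fun k => nbhd_open hΩo _ _
  have hcover : K ⊆ ⋃ k : ↥K, U k := by
    intro x hx
    refine mem_iUnion.mpr ⟨⟨x, hx⟩, hrep x hx, hKΩ hx, ?_⟩
    simp only [sub_self, norm_zero]
    exact half_pos (hε'pos _)
  obtain ⟨t, ht⟩ := hK.elim_finite_subcover U hUopen hcover
  have htne : t.Nonempty := by
    obtain ⟨x, hx⟩ := hKne
    obtain ⟨k, hk, -⟩ := mem_iUnion₂.mp (ht hx)
    exact ⟨k, hk⟩
  refine ⟨t.inf' htne (fun k => ε' k / 2), ?_, ?_⟩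
  · obtain ⟨k, hk, hkeq⟩ := Finset.exists_mem_eq_inf' htne (fun k => ε' k / 2)
    rw [hkeq]
    exact half_pos (hε'pos _)
  · rintro w ⟨x, hx, rfl⟩ y hy hn
    obtain ⟨k, hkt, hrx, hxΩ, hnear⟩ := mem_iUnion₂.mp (ht hx)
    refine hε'ball k y hy ?_
    have h1 : t.inf' htne (fun k => ε' k / 2) ≤ ε' k / 2 := Finset.inf'_le _ hkt
    calc ‖y - pchart f k.1‖ = ‖(y - pchart f x) + (pchart f x - pchart f k.1)‖ := by
          congr 1; abel
      _ ≤ ‖y - pchart f x‖ + ‖pchart f x - pchart f k.1‖ := norm_add_le _ _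
      _ ≤ ε' k := by linarith




lemma pact_mk (g : GLd d) (v : Vd d) (hv : v ≠ 0) :
    pact g (Projectivization.mk ℝ v hv) =
      Projectivization.mk ℝ (g v) (by simp [LinearEquiv.map_ne_zero_iff, hv]) := by
  rw [pact, Projectivization.map_mk]; rfl

lemma pact_one (x : Proj d) : pact 1 x = x := by
  induction x using Projectivization.ind with
  | h v hv => rw [pact_mk]; rfl

lemma pact_mul (g h : GLd d) (x : Proj d) : pact (g * h) x = pact g (pact h x) := by
  induction x using Projectivization.ind with
  | h v hv => rw [pact_mk, pact_mk, pact_mk]; rfl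

lemma pact_image_one (X : Set (Proj d)) : pact 1 '' X = X := by
  have : pact (d := d) 1 = id := funext pact_one
  rw [this, image_id]

lemma pact_image_mul (g h : GLd d) (X : Set (Proj d)) :
    pact (g * h) '' X = pact g '' (pact h '' X) := by
  rw [image_image]
  apply image_congr
  intro x _
  rw [pact_mul]

lemma pact_inv_image (g : GLd d) (X Y : Set (Proj d)) (h : pact g '' X = Y) :
    pact g⁻¹ '' Y = X := by
  rw [← h, ← pact_image_mul, inv_mul_cancel, pact_image_one]

/-- Selection of representatives from a finite set for a reflexive symmetric transitive-ish
relation. -/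
lemma sel {α : Type*} (R : α → α → Prop) (hrefl : ∀ a, R a a) (hsymm : ∀ a b, R a b → R b a)
    {T : Set α} (hT : T.Finite) :
    ∃ S : Set α, S ⊆ T ∧ S.Finite ∧ (∀ X ∈ T, ∃ Y ∈ S, R Y X) ∧
      (∀ X ∈ S, ∀ Y ∈ S, X ≠ Y → ¬ R X Y) := by
  refine Set.Finite.induction_on (motive := fun T _ => ∃ S : Set α, S ⊆ T ∧ S.Finite ∧
    (∀ X ∈ T, ∃ Y ∈ S, R Y X) ∧ (∀ X ∈ S, ∀ Y ∈ S, X ≠ Y → ¬ R X Y)) _ hT ⟨∅, Subset.rfl, finite_empty,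
    fun X hX => absurd hX (notMem_empty X), fun X hX => absurd hX (notMem_empty X)⟩ ?_
  intro a s ha hs ih
  · obtain ⟨S, hS1, hS2, hS3, hS4⟩ := ih
    by_cases hex : ∃ Y ∈ S, R Y a
    · refine ⟨S, hS1.trans (subset_insert a s), hS2, ?_, hS4⟩
      intro X hX
      rcases mem_insert_iff.mp hX with rfl | hX'
      · exact hex
      · exact hS3 X hX'
    · refine ⟨insert a S, insert_subset_insert hS1, hS2.insert a, ?_, ?_⟩
      · intro X hX
        rcases mem_insert_iff.mp hX with rfl | hX'
        · exact ⟨X, mem_insert X S, hrefl X⟩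
        · obtain ⟨Y, hY, hR⟩ := hS3 X hX'
          exact ⟨Y, mem_insert_of_mem a hY, hR⟩
      · intro X hX Y hY hne hR
        rcases mem_insert_iff.mp hX with rfl | hX' <;> rcases mem_insert_iff.mp hY with h | hY'
        · exact hne h.symm
        · exact hex ⟨Y, hY', hsymm X Y hR⟩
        · subst h
          exact hex ⟨X, hX', hR⟩
        · exact hS4 X hX' Y hY' hne hR


lemma hdist_eq (f : Vd d →ₗ[ℝ] ℝ) (Ω : Set (Proj d)) (x y : Proj d) :
    hdist f Ω x y = affHilbertDist (pchart f '' Ω) (pchart f x) (pchart f y) := rfl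

lemma aff_self (K : Set (Vd d)) (p : Vd d) : affHilbertDist K p p = 0 := if_pos rfl

lemma exists_out {B : ℝ} (hB : ∀ w ∈ WS f Ω, ‖w‖ ≤ B)
    (hOK : ∀ x ∈ closure Ω, f x.rep ≠ 0) {X : Set (Proj d)} (hXΩ : X ⊆ Ω)
    (hub : HUnbounded f Ω X) {ε : ℝ} (hε : 0 < ε) :
    ∃ y ∈ X, pchart f y ∉ GS f Ω ε := by
  by_contra hcon
  push_neg at hcon
  apply hub
  refine ⟨(B + B)/ε, fun x hx y hy => ?_⟩
  have hpx := hcon x hx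
  have hpy := hcon y hy
  have hBnn : ‖pchart f x‖ ≤ B := hB _ (GS_subset_W (le_of_lt hε) hpx)
  have hBnn' : ‖pchart f y‖ ≤ B := hB _ (GS_subset_W (le_of_lt hε) hpy)
  rw [hdist_eq]
  by_cases hne : pchart f x = pchart f y
  · rw [hne, aff_self]
    have : (0:ℝ) ≤ B := le_trans (norm_nonneg _) hBnn
    positivity
  · calc affHilbertDist (pchart f '' Ω) (pchart f x) (pchart f y)
        ≤ ‖pchart f y - pchart f x‖ / ε := aff_lip hB hε hpx hpy
      _ ≤ (B + B)/ε := by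
          have := norm_sub_le (pchart f y) (pchart f x)
          gcongr
          linarith

lemma T_finite {f : Vd d →ₗ[ℝ] ℝ} {Ω C : Set (Proj d)} {Γ : Subgroup (GLd d)}
    (h : IsNCC f Ω C Γ) {𝒳 : Set (Set (Proj d))} (h𝒳 : IsCUC f Ω C 𝒳)
    (hiso : StronglyIsolated f Ω 𝒳) {K : Set (Proj d)} (hKC : K ⊆ C) (hKcpt : IsCompact K)
    (hKne : K.Nonempty) :
    {X | X ∈ 𝒳 ∧ (X ∩ K).Nonempty}.Finite := by
  by_contra hinf
  -- context
  have hOK := h.dom.pc.chartOK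
  have hΩo := h.dom.isOpen
  have hWconv : Convex ℝ (WS f Ω) := h.dom.pc.convex.closure
  obtain ⟨B₀, hB₀⟩ := (h.dom.pc.bounded.closure).exists_norm_le
  set B := max B₀ 1 with hBdef
  have hB : ∀ w ∈ WS f Ω, ‖w‖ ≤ B := fun w hw => le_trans (hB₀ w hw) (le_max_left _ _)
  have hB1 : (1:ℝ) ≤ B := le_max_right _ _
  have hKΩ : K ⊆ Ω := fun x hx => h.subset (hKC hx)
  obtain ⟨ρ, hρ0, hρ⟩ := exists_rho hΩo hOK hKcpt hKne hKΩ
  have hKG : ∀ w ∈ pchart f '' K, w ∈ GS f Ω ρ := by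
    rintro w ⟨x, hx, rfl⟩
    refine ⟨pchart_fone f (hOK x (subset_closure (hKΩ hx))), fun y hy hn => ?_⟩
    exact subset_closure (hρ _ ⟨x, hx, rfl⟩ y hy hn)
  -- constants
  set r := (B + B)/ρ + 1 with hrdef
  have hr0 : 0 < r := by
    rw [hrdef]
    have : (0:ℝ) ≤ (B+B)/ρ := div_nonneg (by linarith) (le_of_lt hρ0)
    linarith
  obtain ⟨D, hD0, hDiso⟩ := hiso r hr0
  set R₁ := D + 1 with hR₁def
  have hR₁0 : 0 < R₁ := by linarith
  obtain ⟨hlam0, hlam1⟩ := lam_facts hR₁0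
  set ε₁ := lam R₁ * ρ with hε₁def
  have hε₁0 : 0 < ε₁ := mul_pos hlam0 hρ0
  have hε₁ρ : ε₁ ≤ ρ := by nlinarith
  set ε₂ := ε₁/2 with hε₂def
  have hε₂0 : 0 < ε₂ := by linarith
  set ε' := r * ε₂ / 2 with hε'def
  have hε'0 : 0 < ε' := by positivity
  -- the infinite family
  set T := {X | X ∈ 𝒳 ∧ (X ∩ K).Nonempty} with hTdef
  have hembT : T.Infinite := hinf
  set emb := hembT.natEmbedding with hembdef
  have hX𝒳 : ∀ n : ℕ, (emb n : Set (Proj d)) ∈ 𝒳 := fun n => (emb n).2.1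
  have hXK : ∀ n : ℕ, ((emb n : Set (Proj d)) ∩ K).Nonempty := fun n => (emb n).2.2
  choose κ hκ using hXK
  have hXC : ∀ n, (emb n : Set (Proj d)) ⊆ C := fun n => h𝒳.sub _ (hX𝒳 n)
  have hXΩ : ∀ n, (emb n : Set (Proj d)) ⊆ Ω := fun n => (hXC n).trans h.subset
  have hκΩ : ∀ n, κ n ∈ Ω := fun n => hXΩ n (hκ n).1
  have hGpκρ : ∀ n, pchart f (κ n) ∈ GS f Ω ρ := fun n => hKG _ ⟨κ n, (hκ n).2, rfl⟩
  have hGpκ : ∀ n, pchart f (κ n) ∈ GS f Ω ε₂ := fun n =>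
    GS_mono (by linarith) (hGpκρ n)
  have hpκM : ∀ n, pchart f (κ n) ∈ GS f Ω ε₁ := fun n => GS_mono hε₁ρ (hGpκρ n)
  -- construct far points z n
  have hzex : ∀ n : ℕ, ∃ z : Vd d, z ∈ pchart f '' (emb n : Set (Proj d)) ∧
      z ∈ GS f Ω ε₂ ∧ z ∉ GS f Ω ε₁ := by
    intro n
    obtain ⟨y, hyX, hyM⟩ := exists_out hB hOK (hXΩ n) (h𝒳.unbdd _ (hX𝒳 n)) hε₁0
    set p := pchart f (κ n) with hpdef
    set w := pchart f y with hwdef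
    have hp1 : f p = 1 := (hGpκρ n).1
    have hw1 : f w = 1 := pchart_fone f (hOK y (subset_closure (hXΩ n hyX)))
    have hpX : p ∈ pchart f '' (emb n : Set (Proj d)) := ⟨κ n, (hκ n).1, rfl⟩
    have hwX : w ∈ pchart f '' (emb n : Set (Proj d)) := ⟨y, hyX, rfl⟩
    have hpM : p ∈ GS f Ω ε₁ := hpκM n
    have hpw : p ≠ w := fun hh => hyM (hh ▸ hpM)
    have hΔ : 0 < ‖w - p‖ := norm_pos_iff.mpr (sub_ne_zero_of_ne (Ne.symm hpw))
    set σ : ℝ → Vd d := fun t => p + t • (w - p) with hσdef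
    have hσcont : Continuous σ := continuous_const.add (continuous_id.smul continuous_const)
    have hσ1 : ∀ t, f (σ t) = 1 := by
      intro t
      simp [hσdef, map_add, map_smul, map_sub, hp1, hw1, smul_eq_mul]
    set Sn := Icc (0:ℝ) 1 ∩ σ ⁻¹' (GS f Ω ε₁) with hSndef
    have hSnclosed : IsClosed Sn := isClosed_Icc.inter ((GS_closed ε₁).preimage hσcont)
    have hσ0 : σ 0 = p := by simp [hσdef]
    have hσone : σ 1 = w := by
      funext i
      simp [hσdef]
    have hSn0 : (0:ℝ) ∈ Sn := ⟨⟨le_refl 0, zero_le_one⟩, by rw [mem_preimage, hσ0]; exact hpM⟩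
    have hSnbdd : BddAbove Sn := bddAbove_Icc.mono inter_subset_left
    set ts := sSup Sn with htsdef
    have htsmem : ts ∈ Sn := hSnclosed.csSup_mem ⟨0, hSn0⟩ hSnbdd
    have hts1 : ts < 1 := by
      rcases lt_or_eq_of_le htsmem.1.2 with hlt | heq
      · exact hlt
      · exfalso
        have := htsmem.2
        rw [mem_preimage, heq, hσone] at this
        exact hyM this
    set t' := min 1 (ts + ε₂/‖w - p‖) with ht'def
    have ht'gt : ts < t' := lt_min hts1 (lt_add_of_pos_right _ (div_pos hε₂0 hΔ))
    have ht'le1 : t' ≤ 1 := min_le_left _ _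
    have ht'0 : 0 ≤ t' := le_of_lt (lt_of_le_of_lt htsmem.1.1 ht'gt)
    refine ⟨σ t', ?_, ?_, ?_⟩
    · -- in the chart of X n
      have hkey : σ t' = (1 - t') • p + t' • w := by
        funext i
        simp only [hσdef, Pi.add_apply, Pi.smul_apply, Pi.sub_apply, smul_eq_mul]
        ring
      rw [hkey]
      exact h𝒳.convex _ (hX𝒳 n) hpX hwX (by linarith) ht'0 (by ring)
    · -- in GS ε₂
      refine ⟨hσ1 t', fun y' hy' hn' => ?_⟩
      have hclose : ‖σ t' - σ ts‖ ≤ ε₂ := by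
        have hsub : σ t' - σ ts = (t' - ts) • (w - p) := by
          funext i
          simp only [hσdef, Pi.add_apply, Pi.smul_apply, Pi.sub_apply, smul_eq_mul]
          ring
        rw [hsub, norm_smul, Real.norm_eq_abs, abs_of_pos (by linarith)]
        have h1 : t' - ts ≤ ε₂/‖w - p‖ := by
          have := min_le_right 1 (ts + ε₂/‖w - p‖)
          linarith
        calc (t' - ts) * ‖w - p‖ ≤ ε₂/‖w - p‖ * ‖w - p‖ := by
              apply mul_le_mul_of_nonneg_right h1 (le_of_lt hΔ)
          _ = ε₂ := div_mul_cancel₀ _ (ne_of_gt hΔ)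
      have hσtsM : σ ts ∈ GS f Ω ε₁ := htsmem.2
      refine hσtsM.2 y' hy' ?_
      calc ‖y' - σ ts‖ = ‖(y' - σ t') + (σ t' - σ ts)‖ := by congr 1; abel
        _ ≤ ‖y' - σ t'‖ + ‖σ t' - σ ts‖ := norm_add_le _ _
        _ ≤ ε₁ := by linarith
    · -- not in GS ε₁
      intro hcon
      have ht'Sn : t' ∈ Sn := ⟨⟨ht'0, ht'le1⟩, hcon⟩
      have := le_csSup hSnbdd ht'Sn
      rw [← htsdef] at this
      linarith
  choose z hz1 hz2 hz3 using hzex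
  -- compactness and extraction
  have hWcpt : IsCompact (WS f Ω) :=
    Metric.isCompact_of_isClosed_isBounded isClosed_closure h.dom.pc.bounded.closure
  set u : ℕ → (Vd d) × (Vd d) := fun n => (pchart f (κ n), z n) with hudef
  have hu : ∀ n, u n ∈ (WS f Ω) ×ˢ (WS f Ω) := by
    intro n
    constructor
    · exact subset_closure ⟨κ n, hκΩ n, rfl⟩
    · exact GS_subset_W (le_of_lt hε₂0) (hz2 n)
  obtain ⟨ab, -, φ, hφ, hconv⟩ := (hWcpt.prod hWcpt).tendsto_subseq hu
  rw [Metric.tendsto_atTop] at hconv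
  obtain ⟨N, hN⟩ := hconv (ε'/2) (by linarith)
  set i := φ N with hidef
  set j := φ (N+1) with hjdef
  have hij : i ≠ j := ne_of_lt (hφ (Nat.lt_succ_self N))
  have hXij : (emb i : Set (Proj d)) ≠ (emb j : Set (Proj d)) := by
    intro hv
    exact hij (emb.injective (Subtype.ext hv))
  have hdu : dist (u i) (u j) < ε' := by
    have h1 := hN N (le_refl N)
    have h2 := hN (N+1) (Nat.le_succ N)
    calc dist (u i) (u j) ≤ dist (u i) ab + dist ab (u j) := dist_triangle _ _ _
      _ = dist ((u ∘ φ) N) ab + dist ((u ∘ φ) (N+1)) ab := by rw [dist_comm ab]; rfl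
      _ < ε' := by linarith
  have hκclose : ‖pchart f (κ j) - pchart f (κ i)‖ < ε' := by
    have h1 : dist (u i).1 (u j).1 ≤ dist (u i) (u j) := by
      rw [Prod.dist_eq]; exact le_max_left _ _
    rw [hudef] at h1
    simp only at h1
    rw [dist_eq_norm] at h1
    rw [show pchart f (κ j) - pchart f (κ i) = -(pchart f (κ i) - pchart f (κ j)) by abel,
      norm_neg]
    linarith
  have hzclose : ‖z j - z i‖ < ε' := by
    have h1 : dist (u i).2 (u j).2 ≤ dist (u i) (u j) := by
      rw [Prod.dist_eq]; exact le_max_right _ _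
    rw [hudef] at h1
    simp only at h1
    rw [dist_eq_norm] at h1
    rw [show z j - z i = -(z i - z j) by abel, norm_neg]
    linarith
  -- the four membership facts
  obtain ⟨ζi, hζiX, hζieq⟩ := hz1 i
  obtain ⟨ζj, hζjX, hζjeq⟩ := hz1 j
  have hζiΩ : ζi ∈ Ω := hXΩ i hζiX
  have hζjΩ : ζj ∈ Ω := hXΩ j hζjX
  have hrhalf : ∀ a b : Vd d, a ∈ GS f Ω ε₂ → b ∈ GS f Ω ε₂ → ‖b - a‖ < ε' →
      affHilbertDist (pchart f '' Ω) a b < r := by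
    intro a b hag hbg hn
    calc affHilbertDist (pchart f '' Ω) a b ≤ ‖b - a‖ / ε₂ := aff_lip hB hε₂0 hag hbg
      _ < ε' / ε₂ := by gcongr
      _ = r / 2 := by rw [hε'def]; field_simp
      _ < r := half_lt_self hr0
  have hmem1 : κ i ∈ hnbhd f Ω (emb i : Set (Proj d)) r :=
    ⟨hκΩ i, κ i, (hκ i).1, by rw [hdist_eq, aff_self]; exact hr0⟩
  have hmem2 : κ i ∈ hnbhd f Ω (emb j : Set (Proj d)) r := by
    refine ⟨hκΩ i, κ j, (hκ j).1, ?_⟩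
    rw [hdist_eq]
    exact hrhalf _ _ (hGpκ i) (hGpκ j) hκclose
  have hmem3 : ζi ∈ hnbhd f Ω (emb i : Set (Proj d)) r :=
    ⟨hζiΩ, ζi, hζiX, by rw [hdist_eq, aff_self]; exact hr0⟩
  have hmem4 : ζi ∈ hnbhd f Ω (emb j : Set (Proj d)) r := by
    refine ⟨hζiΩ, ζj, hζjX, ?_⟩
    rw [hdist_eq, hζieq, hζjeq]
    exact hrhalf _ _ (hz2 i) (hz2 j) hzclose
  have hdia := hDiso _ (hX𝒳 i) _ (hX𝒳 j) hXij (κ i) ⟨hmem1, hmem2⟩ ζi ⟨hmem3, hmem4⟩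
  rw [hdist_eq, hζieq] at hdia
  -- contradiction with lemP
  have hqΩ : z i ∈ pchart f '' Ω := image_mono (hXΩ i) (hz1 i)
  have hqo : ∃ εq > 0, ∀ y, f y = 1 → ‖y - z i‖ ≤ εq → y ∈ WS f Ω := by
    obtain ⟨εq, hεq, hball⟩ := chart_open hΩo hOK hqΩ
    exact ⟨εq, hεq, fun y hy hn => subset_closure (hball y hy hn)⟩
  have hd : affHilbertDist (pchart f '' Ω) (pchart f (κ i)) (z i) ≤ R₁ := by
    rw [hR₁def]
    linarith
  have hfin := lemP hWconv hB hρ0 hR₁0 (hGpκρ i) (hz2 i).1 hqo hd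
  exact hz3 i hfin


end Aux

/-- Γ has finitely many orbits in a Γ-invariant strongly isolated collection
`𝒳` of closed unbounded convex subsets of `C`: 𝒳 is the disjoint union of the orbits of
finitely many of its members. -/
theorem stmt_6 {d : ℕ} (f : Vd d →ₗ[ℝ] ℝ) (Ω C : Set (Proj d)) (Γ : Subgroup (GLd d))
    (h : IsNCC f Ω C Γ) (𝒳 : Set (Set (Proj d))) (h𝒳 : IsCUC f Ω C 𝒳)
    (hinv : GInvariant Γ 𝒳) (hiso : StronglyIsolated f Ω 𝒳) :
    ∃ (m : ℕ) (Xs : Fin m → Set (Proj d)),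
      (∀ i, Xs i ∈ 𝒳) ∧
      (∀ X ∈ 𝒳, ∃ i, ∃ γ ∈ Γ, pact γ '' Xs i = X) ∧
      (∀ i j, i ≠ j → ∀ γ ∈ Γ, pact γ '' Xs i ≠ Xs j) := by
  classical
  obtain ⟨K, hKC, hKcpt, hKcc⟩ := h.cocompact
  have hKne : K.Nonempty := by
    obtain ⟨c0, hc0⟩ := h.nonempty
    obtain ⟨γ, hγ, hγK⟩ := hKcc c0 hc0
    exact ⟨_, hγK⟩
  have hTfin : {X | X ∈ 𝒳 ∧ (X ∩ K).Nonempty}.Finite :=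
    Aux.T_finite h h𝒳 hiso hKC hKcpt hKne
  set R : Set (Proj d) → Set (Proj d) → Prop := fun X Y => ∃ γ ∈ Γ, pact γ '' X = Y with hRdef
  have hrefl : ∀ a, R a a := fun a => ⟨1, Subgroup.one_mem Γ, Aux.pact_image_one a⟩
  have hsymm : ∀ a b, R a b → R b a := by
    rintro a b ⟨γ, hγ, hab⟩
    exact ⟨γ⁻¹, Γ.inv_mem hγ, Aux.pact_inv_image γ a b hab⟩
  obtain ⟨S, hST, hSfin, hcov, hpair⟩ := Aux.sel R hrefl hsymm hTfin
  have claimB : ∀ X ∈ 𝒳, ∃ Y ∈ {X | X ∈ 𝒳 ∧ (X ∩ K).Nonempty}, R Y X := by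
    intro X hX
    have hXne : X.Nonempty := by
      by_contra hne
      rw [Set.not_nonempty_iff_eq_empty] at hne
      refine h𝒳.unbdd X hX ⟨0, fun x hx => ?_⟩
      rw [hne] at hx
      exact absurd hx (notMem_empty x)
    obtain ⟨x, hx⟩ := hXne
    obtain ⟨γ, hγ, hγx⟩ := hKcc x (h𝒳.sub X hX hx)
    exact ⟨pact γ '' X, ⟨hinv γ hγ X hX, ⟨pact γ x, ⟨x, hx, rfl⟩, hγx⟩⟩,
      γ⁻¹, Γ.inv_mem hγ, Aux.pact_inv_image γ X _ rfl⟩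
  set Fs := hSfin.toFinset with hFsdef
  refine ⟨Fs.card, fun i => (Fs.equivFin.symm i : Set (Proj d)), ?_, ?_, ?_⟩
  · intro i
    have hmem : (Fs.equivFin.symm i : Set (Proj d)) ∈ S :=
      hSfin.mem_toFinset.mp (Fs.equivFin.symm i).2
    exact ((hST hmem).1)
  · intro X hX
    obtain ⟨Y, hYT, γ₀, hγ₀, hY⟩ := claimB X hX
    obtain ⟨Z, hZS, γ₁, hγ₁, hZ⟩ := hcov Y hYT
    refine ⟨Fs.equivFin ⟨Z, hSfin.mem_toFinset.mpr hZS⟩, γ₀ * γ₁, Γ.mul_mem hγ₀ hγ₁, ?_⟩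
    simp only [Equiv.symm_apply_apply]
    rw [Aux.pact_image_mul]
    show pact γ₀ '' (pact γ₁ '' Z) = X
    rw [hZ, hY]
  · intro i j hij γ hγ hEq
    have hmemi : (Fs.equivFin.symm i : Set (Proj d)) ∈ S :=
      hSfin.mem_toFinset.mp (Fs.equivFin.symm i).2
    have hmemj : (Fs.equivFin.symm j : Set (Proj d)) ∈ S :=
      hSfin.mem_toFinset.mp (Fs.equivFin.symm j).2
    have hne : (Fs.equivFin.symm i : Set (Proj d)) ≠ (Fs.equivFin.symm j : Set (Proj d)) := by
      intro hv
      exact hij (Fs.equivFin.symm.injective (Subtype.ext hv))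
    exact hpair _ hmemi _ hmemj hne ⟨γ, hγ, hEq⟩
end
end

section
/- Let (Omega, C, Gamma) be a naive convex co-compact triple and let X be a Gamma-invariant, strongly isolated collection of closed unbounded convex subsets of C. If X_1, X_2 in X are distinct, then F_Omega(∂_i X_1) ∩ F_Omega(∂_i X_2) = empty, where ∂_i X denotes the ideal boundary (closure of X intersected with the boundary of Omega) and F_Omega(A) is the union of the open faces of points of A. -/
open Set Filter Topology

noncomputable section

variable {d : ℕ}

section ChartLemmas

variable {d : ℕ} (f : Vd d →ₗ[ℝ] ℝ)

lemma f_cont : Continuous f := f.continuous_of_finiteDimensional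

lemma pchart_mk {v : Vd d} (hv : v ≠ 0) (hf : f v ≠ 0) :
    pchart f (Projectivization.mk ℝ v hv) = (f v)⁻¹ • v := by
  obtain ⟨a, ha⟩ := Projectivization.exists_smul_eq_mk_rep ℝ v hv
  unfold pchart
  rw [← ha]
  have : f ((a : ℝ) • v) = (a : ℝ) * f v := by simp
  rw [Units.smul_def, this, smul_smul, mul_inv]
  congr 1
  field_simp

lemma f_pchart {x : Proj d} (hf : f x.rep ≠ 0) : f (pchart f x) = 1 := by
  unfold pchart; simp [hf]

lemma pchart_ne_zero {x : Proj d} (hf : f x.rep ≠ 0) : pchart f x ≠ 0 := by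
  intro h
  have := f_pchart f hf
  rw [h] at this; simp at this

lemma mk_pchart {x : Proj d} (hf : f x.rep ≠ 0) :
    Projectivization.mk ℝ (pchart f x) (pchart_ne_zero f hf) = x := by
  conv_rhs => rw [← Projectivization.mk_rep x]
  rw [Projectivization.mk_eq_mk_iff']
  exact ⟨(f x.rep)⁻¹, rfl⟩

end ChartLemmas
section TopLemmas

variable {d : ℕ}

lemma isQuotientMap_pmk :
    IsQuotientMap (Projectivization.mk' ℝ : {v : Vd d // v ≠ 0} → Proj d) := by
  letI := projectivizationSetoid ℝ (Vd d)
  exact isQuotientMap_quotient_mk'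

lemma continuous_mk' : Continuous (Projectivization.mk' ℝ : {v : Vd d // v ≠ 0} → Proj d) :=
  isQuotientMap_pmk.continuous

lemma isOpenMap_mk' : IsOpenMap (Projectivization.mk' ℝ : {v : Vd d // v ≠ 0} → Proj d) := by
  intro W hW
  rw [← isQuotientMap_pmk.isOpen_preimage]
  have heq : (Projectivization.mk' ℝ : {v : Vd d // v ≠ 0} → Proj d) ⁻¹'
      (Projectivization.mk' ℝ '' W) =
      ⋃ c : ℝˣ, (fun v : {v : Vd d // v ≠ 0} => ⟨(c : ℝ) • (v : Vd d), by
        simp [c.ne_zero, v.2]⟩) ⁻¹' W := by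
    ext v
    simp only [Set.mem_preimage, Set.mem_iUnion]
    constructor
    · rintro ⟨w, hw, hq⟩
      have hq' : Projectivization.mk' ℝ w = Projectivization.mk' ℝ v := hq
      rw [Projectivization.mk'_eq_mk, Projectivization.mk'_eq_mk,
        Projectivization.mk_eq_mk_iff] at hq'
      obtain ⟨a, ha⟩ := hq'
      refine ⟨a, ?_⟩
      have : (⟨(a : ℝ) • (v : Vd d), by simp [a.ne_zero, v.2]⟩ : {v : Vd d // v ≠ 0}) = w := by
        ext1
        rw [← ha, Units.smul_def]
      rw [this]
      exact hw
    · rintro ⟨c, hc⟩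
      refine ⟨_, hc, ?_⟩
      show Projectivization.mk' ℝ _ = Projectivization.mk' ℝ v
      rw [Projectivization.mk'_eq_mk, Projectivization.mk'_eq_mk,
        Projectivization.mk_eq_mk_iff]
      exact ⟨c, by rw [Units.smul_def]⟩
  rw [heq]
  apply isOpen_iUnion
  intro c
  apply hW.preimage
  apply Continuous.subtype_mk
  fun_prop

end TopLemmas
section ClosureLemmas

variable {d : ℕ} (f : Vd d →ₗ[ℝ] ℝ)

lemma pchart_mem_closure_image {S : Set (Proj d)} {x : Proj d}
    (hx : x ∈ closure S) (hfx : f x.rep ≠ 0) :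
    pchart f x ∈ closure (pchart f '' S) := by
  rw [mem_closure_iff]
  intro O hO hvO
  set ψ : Vd d → Vd d := fun w => (f w)⁻¹ • w with hψ
  have hG : IsOpen {w : Vd d | f w ≠ 0 ∧ ψ w ∈ O} := by
    have hcont : ContinuousOn ψ {w : Vd d | f w ≠ 0} := by
      refine ContinuousOn.smul (f := fun w => (f w)⁻¹) (g := id) ?_ ?_
      · exact ((f_cont f).continuousOn).inv₀ (fun w hw => hw)
      · exact continuousOn_id
    have := hcont.isOpen_inter_preimage (isOpen_ne_fun (f_cont f) continuous_const) hO
    exact this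
  have hopen : IsOpen (Projectivization.mk' ℝ ''
      ((Subtype.val : {v : Vd d // v ≠ 0} → Vd d) ⁻¹' {w : Vd d | f w ≠ 0 ∧ ψ w ∈ O})) :=
    isOpenMap_mk' _ (hG.preimage continuous_subtype_val)
  have hxin : x ∈ Projectivization.mk' ℝ ''
      ((Subtype.val : {v : Vd d // v ≠ 0} → Vd d) ⁻¹' {w : Vd d | f w ≠ 0 ∧ ψ w ∈ O}) := by
    refine ⟨⟨x.rep, x.rep_nonzero⟩, ⟨hfx, hvO⟩, ?_⟩
    rw [Projectivization.mk'_eq_mk]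
    exact x.mk_rep
  obtain ⟨x', hx'mem, hx'S⟩ := mem_closure_iff.1 hx _ hopen hxin
  obtain ⟨w, hw, rfl⟩ := hx'mem
  refine ⟨pchart f (Projectivization.mk' ℝ w), ?_, ⟨_, hx'S, rfl⟩⟩
  rw [Projectivization.mk'_eq_mk, pchart_mk f w.2 hw.1]
  exact hw.2

lemma mk_mem_closure {S : Set (Proj d)} (hS : ∀ x ∈ S, f x.rep ≠ 0) {v : Vd d}
    (hv0 : v ≠ 0) (hv : v ∈ closure (pchart f '' S)) :
    Projectivization.mk ℝ v hv0 ∈ closure S := by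
  rw [mem_closure_iff]
  intro O hO hmem
  have hWopen : IsOpen ((Projectivization.mk' ℝ : {v : Vd d // v ≠ 0} → Proj d) ⁻¹' O) :=
    hO.preimage continuous_mk'
  rw [isOpen_induced_iff] at hWopen
  obtain ⟨G, hG, hGeq⟩ := hWopen
  have hvG : v ∈ G := by
    have : (⟨v, hv0⟩ : {v : Vd d // v ≠ 0}) ∈
        (Projectivization.mk' ℝ : {v : Vd d // v ≠ 0} → Proj d) ⁻¹' O := by
      simp only [Set.mem_preimage, Projectivization.mk'_eq_mk]
      exact hmem
    rw [← hGeq] at this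
    exact this
  obtain ⟨u, huG, hus⟩ := mem_closure_iff.1 hv _ hG hvG
  obtain ⟨x', hx'S, rfl⟩ := hus
  have hfx' := hS x' hx'S
  have hu0 : pchart f x' ≠ 0 := pchart_ne_zero f hfx'
  have : (⟨pchart f x', hu0⟩ : {v : Vd d // v ≠ 0}) ∈
      (Projectivization.mk' ℝ : {v : Vd d // v ≠ 0} → Proj d) ⁻¹' O := by
    rw [← hGeq]; exact huG
  simp only [Set.mem_preimage, Projectivization.mk'_eq_mk] at this
  rw [mk_pchart f hfx'] at this
  exact ⟨x', this, hx'S⟩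

end ClosureLemmas
section KLemmas

variable {d : ℕ} {f : Vd d →ₗ[ℝ] ℝ} {Ω : Set (Proj d)}

lemma mem_chart_iff (hpc : IsPC f Ω) {S : Set (Proj d)} (hS : S ⊆ closure Ω) {v : Vd d} :
    v ∈ pchart f '' S ↔ (f v = 1 ∧ ∃ hv : v ≠ 0, Projectivization.mk ℝ v hv ∈ S) := by
  constructor
  · rintro ⟨x, hx, rfl⟩
    have hfx := hpc.chartOK x (hS hx)
    refine ⟨f_pchart f hfx, pchart_ne_zero f hfx, ?_⟩
    rw [mk_pchart f hfx]
    exact hx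
  · rintro ⟨hf1, hv0, hmem⟩
    refine ⟨Projectivization.mk ℝ v hv0, hmem, ?_⟩
    rw [pchart_mk f hv0 (by rw [hf1]; norm_num), hf1]
    simp

lemma chart_subset_hyperplane (hpc : IsPC f Ω) {S : Set (Proj d)} (hS : S ⊆ closure Ω) :
    pchart f '' S ⊆ {v : Vd d | f v = 1} :=
  fun _ hv => ((mem_chart_iff hpc hS).1 hv).1

lemma closure_chart_subset_hyperplane (hpc : IsPC f Ω) {S : Set (Proj d)} (hS : S ⊆ closure Ω) :
    closure (pchart f '' S) ⊆ {v : Vd d | f v = 1} :=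
  closure_minimal (chart_subset_hyperplane hpc hS)
    (isClosed_eq (f_cont f) continuous_const)

lemma K_open_rel (hdom : IsPCDomain f Ω) {u : Vd d} (hu : u ∈ pchart f '' Ω) :
    ∃ ε > 0, ∀ v : Vd d, f v = 1 → ‖v - u‖ < ε → v ∈ pchart f '' Ω := by
  obtain ⟨hfu, hu0, humem⟩ := (mem_chart_iff hdom.pc subset_closure).1 hu
  set U : Set (Vd d) := {v : Vd d | ∃ hv : v ≠ 0, Projectivization.mk ℝ v hv ∈ Ω} with hU
  have hUopen : IsOpen U := by
    have : U = (Subtype.val : {v : Vd d // v ≠ 0} → Vd d) ''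
        ((Projectivization.mk' ℝ : {v : Vd d // v ≠ 0} → Proj d) ⁻¹' Ω) := by
      ext v
      constructor
      · rintro ⟨hv0, hvmem⟩
        exact ⟨⟨v, hv0⟩, by simpa [Projectivization.mk'_eq_mk] using hvmem, rfl⟩
      · rintro ⟨⟨w, hw0⟩, hwmem, rfl⟩
        exact ⟨hw0, by simpa [Projectivization.mk'_eq_mk] using hwmem⟩
    rw [this]
    have hne : IsOpen {v : Vd d | v ≠ 0} := isOpen_ne
    exact hne.isOpenMap_subtype_val _ (hdom.isOpen.preimage continuous_mk')
  have huU : u ∈ U := ⟨hu0, humem⟩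
  obtain ⟨ε, hε, hball⟩ := Metric.isOpen_iff.1 hUopen u huU
  refine ⟨ε, hε, fun v hfv hvu => ?_⟩
  have hvU : v ∈ U := hball (by rwa [Metric.mem_ball, dist_eq_norm])
  obtain ⟨hv0, hvmem⟩ := hvU
  exact (mem_chart_iff hdom.pc subset_closure).2 ⟨hfv, hv0, hvmem⟩

lemma K_segment (hdom : IsPCDomain f Ω) {u v : Vd d} (hu : u ∈ pchart f '' Ω)
    (hv : v ∈ closure (pchart f '' Ω)) {t : ℝ} (ht0 : 0 ≤ t) (ht1 : t < 1) :
    u + t • (v - u) ∈ pchart f '' Ω := by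
  rcases eq_or_lt_of_le ht0 with h0 | h0
  · simp [← h0, hu]
  obtain ⟨ε, hε, hball⟩ := K_open_rel hdom hu
  have h1t : (0:ℝ) < 1 - t := by linarith
  have hδ : (0:ℝ) < (1 - t) * ε / t := by positivity
  obtain ⟨v', hv'K, hvv'⟩ := Metric.mem_closure_iff.1 hv _ hδ
  have hfu : f u = 1 := chart_subset_hyperplane hdom.pc subset_closure hu
  have hfv : f v = 1 := closure_chart_subset_hyperplane hdom.pc subset_closure hv
  have hfv' : f v' = 1 := chart_subset_hyperplane hdom.pc subset_closure hv'K
  set u' : Vd d := u + (t / (1 - t)) • (v - v') with hu'def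
  have hfu' : f u' = 1 := by
    simp only [hu'def, map_add, map_smul, map_sub, hfu, hfv, hfv', smul_eq_mul]
    ring
  have hu'K : u' ∈ pchart f '' Ω := by
    apply hball _ hfu'
    have : ‖u' - u‖ = (t / (1 - t)) * ‖v - v'‖ := by
      rw [hu'def]
      simp only [add_sub_cancel_left]
      rw [norm_smul, Real.norm_eq_abs, abs_of_pos (div_pos h0 h1t)]
    rw [this]
    have hvv' : ‖v - v'‖ < (1 - t) * ε / t := by rwa [← dist_eq_norm]
    calc (t / (1 - t)) * ‖v - v'‖ < (t / (1 - t)) * ((1 - t) * ε / t) := by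
          apply mul_lt_mul_of_pos_left hvv' (div_pos h0 h1t)
      _ = ε := by field_simp
  have hcomb : u + t • (v - u) = (1 - t) • u' + t • v' := by
    rw [hu'def, smul_add, smul_smul]
    have hmul : (1 - t) * (t / (1 - t)) = t := by field_simp
    rw [hmul]
    module
  rw [hcomb]
  exact hdom.pc.convex hu'K hv'K (by linarith) (le_of_lt h0) (by ring)

end KLemmas
section MetricLemmas

variable {d : ℕ}

lemma segSet_bdd {K : Set (Vd d)} (hb : Bornology.IsBounded K) {x y : Vd d} (hxy : x ≠ y) :
    BddAbove (segSet K x y) ∧ BddBelow (segSet K x y) := by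
  obtain ⟨R, hR⟩ := (hb.closure).exists_norm_le
  have hyx : (0:ℝ) < ‖y - x‖ := by
    rw [norm_pos_iff]
    exact sub_ne_zero_of_ne (Ne.symm hxy)
  have key : ∀ t ∈ segSet K x y, |t| ≤ (R + ‖x‖) / ‖y - x‖ := by
    intro t ht
    have h1 : ‖x + t • (y - x)‖ ≤ R := hR _ ht
    have h2 : ‖t • (y - x)‖ ≤ ‖x + t • (y - x)‖ + ‖x‖ := by
      have := norm_add_le (x + t • (y - x)) (-x)
      simpa using this
    rw [norm_smul, Real.norm_eq_abs] at h2
    rw [le_div_iff₀ hyx]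
    calc |t| * ‖y - x‖ ≤ ‖x + t • (y - x)‖ + ‖x‖ := h2
      _ ≤ R + ‖x‖ := by linarith
  exact ⟨⟨_, fun t ht => (abs_le.1 (key t ht)).2⟩, ⟨_, fun t ht => (abs_le.1 (key t ht)).1⟩⟩

lemma affHilbertDist_le {K : Set (Vd d)} (hb : Bornology.IsBounded K)
    {z₁ z₂ : Vd d} {lam lam' : ℝ} (hl : 0 < lam) (hl' : 0 < lam')
    (h1 : z₁ + lam • (z₁ - z₂) ∈ closure K) (h2 : z₂ + lam' • (z₂ - z₁) ∈ closure K) :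
    affHilbertDist K z₁ z₂ ≤ (1/2) * Real.log ((1 + 1/lam') * (1 + 1/lam)) := by
  have hrhs1 : (1:ℝ) ≤ (1 + 1/lam') * (1 + 1/lam) := by
    have a1 : (1:ℝ) ≤ 1 + 1/lam' := by
      have : (0:ℝ) < 1/lam' := by positivity
      linarith
    have a2 : (1:ℝ) ≤ 1 + 1/lam := by
      have : (0:ℝ) < 1/lam := by positivity
      linarith
    nlinarith
  unfold affHilbertDist
  split_ifs with h
  · have := Real.log_nonneg hrhs1
    positivity
  · have hxy : z₁ ≠ z₂ := h
    have mem1 : (-lam) ∈ segSet K z₁ z₂ := by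
      show z₁ + (-lam) • (z₂ - z₁) ∈ closure K
      have heq : z₁ + (-lam) • (z₂ - z₁) = z₁ + lam • (z₁ - z₂) := by module
      rw [heq]; exact h1
    have mem2 : (1 + lam') ∈ segSet K z₁ z₂ := by
      show z₁ + (1 + lam') • (z₂ - z₁) ∈ closure K
      have heq : z₁ + (1 + lam') • (z₂ - z₁) = z₂ + lam' • (z₂ - z₁) := by module
      rw [heq]; exact h2
    obtain ⟨hba, hbb⟩ := segSet_bdd hb hxy
    set s := sSup (segSet K z₁ z₂) with hs
    set r := sInf (segSet K z₁ z₂) with hr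
    have hs2 : 1 + lam' ≤ s := le_csSup hba mem2
    have hr2 : r ≤ -lam := csInf_le hbb mem1
    have hs1 : 0 < s - 1 := by linarith
    have hr1 : 0 < -r := by linarith
    have key : s * (1 - r) / ((s - 1) * (-r)) = (1 + 1/(s-1)) * (1 + 1/(-r)) := by
      field_simp [(by linarith : r < 0).ne]
      ring
    rw [key]
    have hb1 : 1 + 1/(s-1) ≤ 1 + 1/lam' := by
      have := one_div_le_one_div_of_le hl' (by linarith : lam' ≤ s - 1)
      linarith
    have hb2 : 1 + 1/(-r) ≤ 1 + 1/lam := by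
      have := one_div_le_one_div_of_le hl (by linarith : lam ≤ -r)
      linarith
    have harg : (1 + 1/(s-1)) * (1 + 1/(-r)) ≤ (1 + 1/lam') * (1 + 1/lam) := by
      have p1 : (0:ℝ) < 1 + 1/(s-1) := by positivity
      have p2 : (0:ℝ) < 1 + 1/(-r) := by positivity
      nlinarith
    have hpos : (0:ℝ) < (1 + 1/(s-1)) * (1 + 1/(-r)) := by positivity
    have := Real.log_le_log hpos harg
    linarith

lemma affHilbertDist_ge {K : Set (Vd d)} (hb : Bornology.IsBounded K)
    {p v : Vd d} {t τ : ℝ} (hpv : v ≠ p) (ht0 : 0 < t) (ht1 : t < 1)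
    (hub : ∀ σ : ℝ, p + σ • (v - p) ∈ closure K → σ ≤ 1)
    (hmid : p + ((1+t)/2) • (v - p) ∈ closure K)
    (hτ0 : 0 < τ) (hneg : p + (-τ) • (v - p) ∈ closure K) :
    (1/2) * Real.log (1/(1-t)) ≤ affHilbertDist K p (p + t • (v - p)) := by
  set y := p + t • (v - p) with hy
  have hyp : p ≠ y := by
    intro hcon
    apply hpv
    have : t • (v - p) = 0 := by
      have := congrArg (fun w => w - p) hcon
      simpa [hy] using this.symm
    rcases smul_eq_zero.1 this with h' | h'
    · exact absurd h' (ne_of_gt ht0)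
    · exact sub_eq_zero.1 h' ▸ rfl
  have hyx : y - p = t • (v - p) := by simp [hy]
  have hsegeq : ∀ σ : ℝ, p + σ • (y - p) = p + (σ * t) • (v - p) := by
    intro σ
    rw [hyx, smul_smul]
  have mem_mid : (1+t)/(2*t) ∈ segSet K p y := by
    show p + ((1+t)/(2*t)) • (y - p) ∈ closure K
    rw [hsegeq]
    have : (1+t)/(2*t) * t = (1+t)/2 := by field_simp
    rw [this]
    exact hmid
  have mem_neg : -(τ/t) ∈ segSet K p y := by
    show p + (-(τ/t)) • (y - p) ∈ closure K
    rw [hsegeq]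
    have : -(τ/t) * t = -τ := by field_simp
    rw [this]
    exact hneg
  obtain ⟨hba, hbb⟩ := segSet_bdd hb hyp
  set s := sSup (segSet K p y) with hs
  set r := sInf (segSet K p y) with hr
  have hsle : s ≤ 1/t := by
    apply csSup_le ⟨_, mem_mid⟩
    intro σ hσ
    have h2 : σ * t ≤ 1 := by
      apply hub (σ * t)
      rw [← hsegeq]
      exact hσ
    rw [le_div_iff₀ ht0]
    exact h2
  have hsge : (1+t)/(2*t) ≤ s := le_csSup hba mem_mid
  have hs1 : 1 < s := by
    apply lt_of_lt_of_le _ hsge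
    rw [lt_div_iff₀ (by linarith : 0 < 2*t)]
    linarith
  have hrle : r ≤ -(τ/t) := csInf_le hbb mem_neg
  have hr0 : 0 < -r := by
    have : 0 < τ/t := div_pos hτ0 ht0
    linarith
  have hs0 : 0 < s - 1 := by linarith
  unfold affHilbertDist
  rw [if_neg hyp]
  rw [← hs, ← hr]
  have key : s * (1 - r) / ((s - 1) * (-r)) = (1 + 1/(s-1)) * (1 + 1/(-r)) := by
    field_simp [(by linarith : r < 0).ne]
    ring
  rw [key]
  have hfac1 : 1/(1-t) ≤ 1 + 1/(s-1) := by
    have hsle' : s - 1 ≤ (1-t)/t := by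
      have : (1:ℝ)/t - 1 = (1-t)/t := by field_simp
      linarith [hsle]
    have h1t : (0:ℝ) < 1 - t := by linarith
    have := one_div_le_one_div_of_le hs0 hsle'
    rw [one_div_div] at this
    have ht1t : t/(1-t) ≤ 1/(s-1) := this
    have heq : (1:ℝ)/(1-t) = 1 + t/(1-t) := by field_simp; ring
    linarith
  have hfac2 : (1:ℝ) ≤ 1 + 1/(-r) := by
    have : (0:ℝ) < 1/(-r) := by positivity
    linarith
  have h1t : (0:ℝ) < 1 - t := by linarith
  have hpos : (0:ℝ) < 1/(1-t) := by positivity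
  have harg : 1/(1-t) ≤ (1 + 1/(s-1)) * (1 + 1/(-r)) := by
    have p1 : (0:ℝ) < 1 + 1/(s-1) := by positivity
    nlinarith
  have := Real.log_le_log hpos harg
  linarith

end MetricLemmas
section MoreHelpers

variable {d : ℕ} (f : Vd d →ₗ[ℝ] ℝ)

lemma pchart_mk_one {z : Vd d} (hz0 : z ≠ 0) (hz1 : f z = 1) :
    pchart f (Projectivization.mk ℝ z hz0) = z := by
  rw [pchart_mk f hz0 (by rw [hz1]; norm_num), hz1]
  simp

lemma ne_zero_of_f_one {z : Vd d} (hz1 : f z = 1) : z ≠ 0 := by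
  intro h; rw [h] at hz1; simp at hz1

end MoreHelpers
section FaceLemmas

variable {d : ℕ}

lemma mem_of_between {A : Set (Vd d)} (hconv : Convex ℝ A) {v e : Vd d} {δ₀ lam : ℝ}
    (h0 : 0 < δ₀) (hv : v ∈ A) (hδ : v + δ₀ • e ∈ A) (h1 : 0 ≤ lam) (h2 : lam ≤ δ₀) :
    v + lam • e ∈ A := by
  have hμ0 : 0 ≤ lam / δ₀ := by positivity
  have hμ1 : lam / δ₀ ≤ 1 := by
    rw [div_le_one h0]; exact h2
  have hcomb := hconv hv hδ (by linarith : 0 ≤ 1 - lam/δ₀) hμ0 (by ring)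
  have heq : (1 - lam/δ₀) • v + (lam/δ₀) • (v + δ₀ • e) = v + lam • e := by
    have : (lam/δ₀) * δ₀ = lam := by field_simp
    have expand : (1 - lam/δ₀) • v + (lam/δ₀) • (v + δ₀ • e) = v + ((lam/δ₀) * δ₀) • e := by
      module
    rw [expand, this]
  rwa [heq] at hcomb

lemma seg_extend {a b u w : Vd d} (hu : u ∈ openSegment ℝ a b)
    (hw : w ∈ openSegment ℝ a b) (huw : u ≠ w) :
    ∃ α : ℝ, 0 < α ∧ ∀ s ∈ Icc (0:ℝ) α, u + s • (u - w) ∈ openSegment ℝ a b := by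
  rw [openSegment_eq_image'] at hu hw
  obtain ⟨θ, hθ, rfl⟩ := hu
  obtain ⟨θ', hθ', rfl⟩ := hw
  have hne : θ ≠ θ' := by
    intro hcon; exact huw (by rw [hcon])
  have habs : 0 < |θ - θ'| := by
    rw [abs_pos]; exact sub_ne_zero_of_ne hne
  refine ⟨min (θ / (2 * |θ - θ'|)) ((1 - θ) / (2 * |θ - θ'|)), ?_, ?_⟩
  · apply lt_min
    · exact div_pos hθ.1 (by positivity)
    · exact div_pos (by linarith [hθ.2]) (by positivity)
  · intro s hs
    rw [openSegment_eq_image']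
    refine ⟨θ + s * (θ - θ'), ⟨?_, ?_⟩, ?_⟩
    · have h1 : |s * (θ - θ')| ≤ θ / 2 := by
        rw [abs_mul, abs_of_nonneg hs.1]
        calc s * |θ - θ'| ≤ (θ / (2 * |θ - θ'|)) * |θ - θ'| := by
              apply mul_le_mul_of_nonneg_right (le_trans hs.2 (min_le_left _ _)) (le_of_lt habs)
          _ = θ / 2 := by field_simp
      have := abs_le.1 h1
      linarith [hθ.1, this.1]
    · have h1 : |s * (θ - θ')| ≤ (1 - θ) / 2 := by
        rw [abs_mul, abs_of_nonneg hs.1]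
        calc s * |θ - θ'| ≤ ((1 - θ) / (2 * |θ - θ'|)) * |θ - θ'| := by
              apply mul_le_mul_of_nonneg_right (le_trans hs.2 (min_le_right _ _)) (le_of_lt habs)
          _ = (1 - θ) / 2 := by field_simp
      have := abs_le.1 h1
      linarith [hθ.2, this.2]
    · have : (a + θ • (b - a)) + s • ((a + θ • (b - a)) - (a + θ' • (b - a)))
          = a + (θ + s * (θ - θ')) • (b - a) := by
        have expand : (a + θ • (b - a)) - (a + θ' • (b - a)) = (θ - θ') • (b - a) := by
          module
        rw [expand, smul_smul]
        module
      rw [this]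

lemma combo_extend {A : Set (Vd d)} (hconv : Convex ℝ A) {v₁ v₂ y0 : Vd d} {α β' : ℝ}
    (hα : 0 < α) (hβ' : 0 < β')
    (hA1 : ∀ s ∈ Icc (0:ℝ) α, v₁ + s • (v₁ - y0) ∈ A)
    (hB : ∀ s ∈ Icc (0:ℝ) β', y0 + s • (y0 - v₂) ∈ A) :
    ∃ δ : ℝ, 0 < δ ∧ v₁ + δ • (v₁ - v₂) ∈ A := by
  set μ : ℝ := min (1/2) (α/4) with hμdef
  have hμ0 : 0 < μ := by
    apply lt_min <;> [norm_num; positivity]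
  have hμhalf : μ ≤ 1/2 := min_le_left _ _
  have hμα : μ ≤ α/4 := min_le_right _ _
  set δ : ℝ := min (μ * β') (α/4) with hδdef
  have hδ0 : 0 < δ := by
    apply lt_min <;> positivity
  set a : ℝ := (δ + μ) / (1 - μ) with hadef
  set b : ℝ := δ / μ with hbdef
  have h1μ : 0 < 1 - μ := by linarith
  have haα : a ∈ Icc (0:ℝ) α := by
    constructor
    · positivity
    · rw [hadef, div_le_iff₀ h1μ]
      have hδα : δ ≤ α/4 := min_le_right _ _
      nlinarith
  have hbβ : b ∈ Icc (0:ℝ) β' := by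
    constructor
    · positivity
    · rw [hbdef, div_le_iff₀ hμ0]
      calc δ ≤ μ * β' := min_le_left _ _
        _ = β' * μ := by ring
  have hA0 : v₁ + a • (v₁ - y0) ∈ A := hA1 a haα
  have hB0 : y0 + b • (y0 - v₂) ∈ A := hB b hbβ
  refine ⟨δ, hδ0, ?_⟩
  have hcomb := hconv hA0 hB0 (by linarith : (0:ℝ) ≤ 1 - μ) (le_of_lt hμ0) (by ring)
  have e1 : (1 - μ) * a - μ = δ := by
    rw [hadef]
    field_simp; ring
  have e2 : μ * b = δ := by
    rw [hbdef]
    field_simp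
  have key : (1 - μ) • (v₁ + a • (v₁ - y0)) + μ • (y0 + b • (y0 - v₂))
      = v₁ + ((1 - μ) * a - μ) • (v₁ - y0) + (μ * b) • (y0 - v₂) := by
    module
  rw [key, e1, e2] at hcomb
  have final : v₁ + δ • (v₁ - y0) + δ • (y0 - v₂) = v₁ + δ • (v₁ - v₂) := by
    module
  rwa [final] at hcomb

lemma extension {A : Set (Vd d)} (hconv : Convex ℝ A) {v₁ v₂ y0 : Vd d}
    (h₁A : v₁ ∈ A) (h₂A : v₂ ∈ A)
    (h₁ : v₁ = y0 ∨ ∃ a b : Vd d, openSegment ℝ a b ⊆ A ∧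
      v₁ ∈ openSegment ℝ a b ∧ y0 ∈ openSegment ℝ a b)
    (h₂ : v₂ = y0 ∨ ∃ a b : Vd d, openSegment ℝ a b ⊆ A ∧
      v₂ ∈ openSegment ℝ a b ∧ y0 ∈ openSegment ℝ a b) :
    ∃ δ : ℝ, 0 < δ ∧ v₁ + δ • (v₁ - v₂) ∈ A ∧ v₂ + δ • (v₂ - v₁) ∈ A := by
  by_cases hv12 : v₁ = v₂
  · refine ⟨1, one_pos, ?_, ?_⟩ <;> simp [hv12, h₂A]
  -- one-sided extension helper, applied symmetrically
  have onesided : ∀ u w : Vd d, u ≠ w →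
      (u = y0 ∨ ∃ a b : Vd d, openSegment ℝ a b ⊆ A ∧
        u ∈ openSegment ℝ a b ∧ y0 ∈ openSegment ℝ a b) →
      (w = y0 ∨ ∃ a b : Vd d, openSegment ℝ a b ⊆ A ∧
        w ∈ openSegment ℝ a b ∧ y0 ∈ openSegment ℝ a b) →
      ∃ δ : ℝ, 0 < δ ∧ u + δ • (u - w) ∈ A := by
    intro u w huw hu hw
    by_cases huy : u = y0
    · -- u = y0, so w ≠ y0, use w's segment
      subst huy
      rcases hw with hwy | ⟨c, e, hce, hwce, hyce⟩
      · exact absurd hwy.symm huw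
      have hwy : w ≠ u := fun hc => huw hc.symm
      obtain ⟨β, hβ0, hβ⟩ := seg_extend hyce hwce (Ne.symm hwy)
      exact ⟨β, hβ0, hce (hβ β ⟨le_of_lt hβ0, le_refl _⟩)⟩
    · rcases hu with hu | ⟨a, b, hab, huab, hyab⟩
      · exact absurd hu huy
      obtain ⟨α, hα0, hα⟩ := seg_extend huab hyab huy
      by_cases hwy : w = y0
      · subst hwy
        exact ⟨α, hα0, hab (hα α ⟨le_of_lt hα0, le_refl _⟩)⟩
      · rcases hw with hw | ⟨c, e, hce, hwce, hyce⟩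
        · exact absurd hw hwy
        obtain ⟨β, hβ0, hβ⟩ := seg_extend hyce hwce (fun hc => hwy hc.symm)
        apply combo_extend hconv hα0 hβ0
        · intro s hs; exact hab (hα s hs)
        · intro s hs; exact hce (hβ s hs)
  obtain ⟨δ₁, hδ₁0, hδ₁⟩ := onesided v₁ v₂ hv12 h₁ h₂
  obtain ⟨δ₂, hδ₂0, hδ₂⟩ := onesided v₂ v₁ (Ne.symm hv12) h₂ h₁
  refine ⟨min δ₁ δ₂, lt_min hδ₁0 hδ₂0, ?_, ?_⟩
  · exact mem_of_between hconv hδ₁0 h₁A hδ₁ (le_of_lt (lt_min hδ₁0 hδ₂0)) (min_le_left _ _)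
  · exact mem_of_between hconv hδ₂0 h₂A hδ₂ (le_of_lt (lt_min hδ₁0 hδ₂0)) (min_le_right _ _)

end FaceLemmas
/-- distinct members of a Γ-invariant strongly isolated collection of closed
unbounded convex subsets of `C` have disjoint sets of faces of their ideal boundaries. -/
theorem stmt_8 {d : ℕ} (f : Vd d →ₗ[ℝ] ℝ) (Ω C : Set (Proj d)) (Γ : Subgroup (GLd d))
    (h : IsNCC f Ω C Γ) (𝒳 : Set (Set (Proj d))) (h𝒳 : IsCUC f Ω C 𝒳)
    (hinv : GInvariant Γ 𝒳) (hiso : StronglyIsolated f Ω 𝒳)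
    (X₁ X₂ : Set (Proj d)) (h₁ : X₁ ∈ 𝒳) (h₂ : X₂ ∈ 𝒳) (hne : X₁ ≠ X₂) :
    pfaceSet f Ω (idealBdry Ω X₁) ∩ pfaceSet f Ω (idealBdry Ω X₂) = ∅ := by
  rw [Set.eq_empty_iff_forall_notMem]
  rintro y ⟨hy1, hy2⟩
  simp only [pfaceSet, Set.mem_iUnion] at hy1 hy2
  obtain ⟨x₁, hx₁, hyx₁⟩ := hy1
  obtain ⟨x₂, hx₂, hyx₂⟩ := hy2
  obtain ⟨hx₁c, hx₁f⟩ := hx₁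
  obtain ⟨hx₂c, hx₂f⟩ := hx₂
  have hdom := h.dom
  -- basic inclusions
  have hX₁Ω : X₁ ⊆ Ω := fun z hz => h.subset (h𝒳.sub X₁ h₁ hz)
  have hX₂Ω : X₂ ⊆ Ω := fun z hz => h.subset (h𝒳.sub X₂ h₂ hz)
  have hok : ∀ x ∈ closure Ω, f x.rep ≠ 0 := hdom.pc.chartOK
  have hclX₁ : closure X₁ ⊆ closure Ω := closure_mono hX₁Ω
  have hclX₂ : closure X₂ ⊆ closure Ω := closure_mono hX₂Ω
  have fx₁ : f x₁.rep ≠ 0 := hok x₁ (hclX₁ hx₁c)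
  have fx₂ : f x₂.rep ≠ 0 := hok x₂ (hclX₂ hx₂c)
  -- chart sets
  set K : Set (Vd d) := pchart f '' Ω with hK
  set A : Set (Vd d) := closure K with hA
  have hKb : Bornology.IsBounded K := hdom.pc.bounded
  have hconvA : Convex ℝ A := hdom.pc.convex.closure
  set v₁ : Vd d := pchart f x₁ with hv₁
  set v₂ : Vd d := pchart f x₂ with hv₂
  set y0 : Vd d := pchart f y with hy0
  have hv₁K₁ : v₁ ∈ closure (pchart f '' X₁) := pchart_mem_closure_image f hx₁c fx₁
  have hv₂K₂ : v₂ ∈ closure (pchart f '' X₂) := pchart_mem_closure_image f hx₂c fx₂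
  have hv₁A : v₁ ∈ A := closure_mono (Set.image_mono hX₁Ω) hv₁K₁
  have hv₂A : v₂ ∈ A := closure_mono (Set.image_mono hX₂Ω) hv₂K₂
  have hfA : ∀ z ∈ A, f z = 1 :=
    fun z hz => closure_chart_subset_hyperplane hdom.pc subset_closure hz
  have hfv₁ : f v₁ = 1 := hfA v₁ hv₁A
  have hfv₂ : f v₂ = 1 := hfA v₂ hv₂A
  -- v₁, v₂ are not in K (they are boundary points)
  have hx₁notΩ : x₁ ∉ Ω := by
    intro hc
    rw [hdom.isOpen.frontier_eq] at hx₁f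
    exact hx₁f.2 hc
  have hx₂notΩ : x₂ ∉ Ω := by
    intro hc
    rw [hdom.isOpen.frontier_eq] at hx₂f
    exact hx₂f.2 hc
  have hv₁notK : v₁ ∉ K := by
    intro hc
    obtain ⟨hf1, hv0, hmem⟩ := (mem_chart_iff hdom.pc subset_closure).1 hc
    rw [mk_pchart f fx₁] at hmem
    exact hx₁notΩ hmem
  have hv₂notK : v₂ ∉ K := by
    intro hc
    obtain ⟨hf1, hv0, hmem⟩ := (mem_chart_iff hdom.pc subset_closure).1 hc
    rw [mk_pchart f fx₂] at hmem
    exact hx₂notΩ hmem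
  -- face relations
  have h₁rel : v₁ = y0 ∨ ∃ a b : Vd d, openSegment ℝ a b ⊆ A ∧
      v₁ ∈ openSegment ℝ a b ∧ y0 ∈ openSegment ℝ a b := by
    rcases hyx₁ with hyy | ⟨hyclΩ, haff⟩
    · left; rw [hy0, hyy]
    · rcases haff with haffe | ⟨hy0A, a, b, hseg, hv₁seg, hy0seg⟩
      · left; rw [hy0, haffe]
      · right; exact ⟨a, b, hseg, hv₁seg, hy0seg⟩
  have h₂rel : v₂ = y0 ∨ ∃ a b : Vd d, openSegment ℝ a b ⊆ A ∧
      v₂ ∈ openSegment ℝ a b ∧ y0 ∈ openSegment ℝ a b := by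
    rcases hyx₂ with hyy | ⟨hyclΩ, haff⟩
    · left; rw [hy0, hyy]
    · rcases haff with haffe | ⟨hy0A, a, b, hseg, hv₂seg, hy0seg⟩
      · left; rw [hy0, haffe]
      · right; exact ⟨a, b, hseg, hv₂seg, hy0seg⟩
  obtain ⟨δ, hδ0, hext₁, hext₂⟩ := extension hconvA hv₁A hv₂A h₁rel h₂rel
  -- base points
  have hX₁ne : X₁.Nonempty := by
    by_contra hc
    rw [Set.not_nonempty_iff_eq_empty] at hc
    exact h𝒳.unbdd X₁ h₁ ⟨0, fun x hx => absurd hx (by simp [hc])⟩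
  have hX₂ne : X₂.Nonempty := by
    by_contra hc
    rw [Set.not_nonempty_iff_eq_empty] at hc
    exact h𝒳.unbdd X₂ h₂ ⟨0, fun x hx => absurd hx (by simp [hc])⟩
  obtain ⟨p₁, hp₁⟩ := hX₁ne
  obtain ⟨p₂, hp₂⟩ := hX₂ne
  set q₁ : Vd d := pchart f p₁ with hq₁
  set q₂ : Vd d := pchart f p₂ with hq₂
  have hq₁K : q₁ ∈ K := ⟨p₁, hX₁Ω hp₁, rfl⟩
  have hq₂K : q₂ ∈ K := ⟨p₂, hX₂Ω hp₂, rfl⟩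
  have hq₁K₁ : q₁ ∈ pchart f '' X₁ := ⟨p₁, hp₁, rfl⟩
  have hq₂K₂ : q₂ ∈ pchart f '' X₂ := ⟨p₂, hp₂, rfl⟩
  have hfq₁ : f q₁ = 1 := hfA q₁ (subset_closure hq₁K)
  have hfq₂ : f q₂ = 1 := hfA q₂ (subset_closure hq₂K)
  have hv₁q₁ : v₁ ≠ q₁ := fun hc => hv₁notK (hc ▸ hq₁K)
  -- neighborhood radii
  obtain ⟨ε₁, hε₁0, hball₁⟩ := K_open_rel hdom hq₁K
  obtain ⟨ε₂, hε₂0, hball₂⟩ := K_open_rel hdom hq₂K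
  set lam : ℝ := min δ (ε₁ / (‖q₁ - q₂‖ + 1)) with hlam
  set lam' : ℝ := min δ (ε₂ / (‖q₂ - q₁‖ + 1)) with hlam'
  have hlam0 : 0 < lam := lt_min hδ0 (by positivity)
  have hlam'0 : 0 < lam' := lt_min hδ0 (by positivity)
  have hq₁' : q₁ + lam • (q₁ - q₂) ∈ K := by
    apply hball₁
    · simp only [map_add, map_smul, map_sub, hfq₁, hfq₂, smul_eq_mul]; ring
    · have : ‖q₁ + lam • (q₁ - q₂) - q₁‖ = lam * ‖q₁ - q₂‖ := by
        rw [add_sub_cancel_left, norm_smul, Real.norm_eq_abs, abs_of_pos hlam0]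
      rw [this]
      calc lam * ‖q₁ - q₂‖ ≤ (ε₁ / (‖q₁ - q₂‖ + 1)) * ‖q₁ - q₂‖ := by
            apply mul_le_mul_of_nonneg_right (min_le_right _ _) (norm_nonneg _)
        _ < ε₁ := by
            rw [div_mul_eq_mul_div, div_lt_iff₀ (by positivity)]
            nlinarith [norm_nonneg (q₁ - q₂)]
  have hq₂' : q₂ + lam' • (q₂ - q₁) ∈ K := by
    apply hball₂
    · simp only [map_add, map_smul, map_sub, hfq₁, hfq₂, smul_eq_mul]; ring
    · have : ‖q₂ + lam' • (q₂ - q₁) - q₂‖ = lam' * ‖q₂ - q₁‖ := by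
        rw [add_sub_cancel_left, norm_smul, Real.norm_eq_abs, abs_of_pos hlam'0]
      rw [this]
      calc lam' * ‖q₂ - q₁‖ ≤ (ε₂ / (‖q₂ - q₁‖ + 1)) * ‖q₂ - q₁‖ := by
            apply mul_le_mul_of_nonneg_right (min_le_right _ _) (norm_nonneg _)
        _ < ε₂ := by
            rw [div_mul_eq_mul_div, div_lt_iff₀ (by positivity)]
            nlinarith [norm_nonneg (q₂ - q₁)]
  have hv₁' : v₁ + lam • (v₁ - v₂) ∈ A :=
    mem_of_between hconvA hδ0 hv₁A hext₁ (le_of_lt hlam0) (min_le_left _ _)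
  have hv₂' : v₂ + lam' • (v₂ - v₁) ∈ A :=
    mem_of_between hconvA hδ0 hv₂A hext₂ (le_of_lt hlam'0) (min_le_left _ _)
  -- the rays
  set z₁ : ℝ → Vd d := fun t => q₁ + t • (v₁ - q₁) with hz₁
  set z₂ : ℝ → Vd d := fun t => q₂ + t • (v₂ - q₂) with hz₂
  have hz₁K : ∀ t ∈ Ico (0:ℝ) 1, z₁ t ∈ K := fun t ht =>
    K_segment hdom hq₁K (closure_mono (Set.image_mono hX₁Ω) hv₁K₁) ht.1 ht.2
  have hz₂K : ∀ t ∈ Ico (0:ℝ) 1, z₂ t ∈ K := fun t ht =>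
    K_segment hdom hq₂K (closure_mono (Set.image_mono hX₂Ω) hv₂K₂) ht.1 ht.2
  have hfz₁ : ∀ t : ℝ, f (z₁ t) = 1 := by
    intro t
    simp only [hz₁, map_add, map_smul, map_sub, hfq₁, hfv₁, smul_eq_mul]; ring
  have hfz₂ : ∀ t : ℝ, f (z₂ t) = 1 := by
    intro t
    simp only [hz₂, map_add, map_smul, map_sub, hfq₂, hfv₂, smul_eq_mul]; ring
  have hz₁0 : ∀ t : ℝ, z₁ t ≠ 0 := fun t => ne_zero_of_f_one f (hfz₁ t)
  have hz₂0 : ∀ t : ℝ, z₂ t ≠ 0 := fun t => ne_zero_of_f_one f (hfz₂ t)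
  set ζ : ℝ → Proj d := fun t => Projectivization.mk ℝ (z₁ t) (hz₁0 t) with hζ
  set ξ : ℝ → Proj d := fun t => Projectivization.mk ℝ (z₂ t) (hz₂0 t) with hξ
  have hζX₁ : ∀ t ∈ Ico (0:ℝ) 1, ζ t ∈ X₁ := by
    intro t ht
    apply h𝒳.closedIn X₁ h₁
    constructor
    · apply mk_mem_closure f (fun x hx => hok x (hclX₁ (subset_closure hx)))
      have hsub : segment ℝ q₁ v₁ ⊆ closure (pchart f '' X₁) :=
        ((h𝒳.convex X₁ h₁).closure).segment_subset (subset_closure hq₁K₁) hv₁K₁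
      apply hsub
      rw [segment_eq_image']
      exact ⟨t, ⟨ht.1, le_of_lt ht.2⟩, rfl⟩
    · obtain ⟨hf1, hv0, hmem⟩ := (mem_chart_iff hdom.pc subset_closure).1 (hz₁K t ht)
      exact hmem
  have hξX₂ : ∀ t ∈ Ico (0:ℝ) 1, ξ t ∈ X₂ := by
    intro t ht
    apply h𝒳.closedIn X₂ h₂
    constructor
    · apply mk_mem_closure f (fun x hx => hok x (hclX₂ (subset_closure hx)))
      have hsub : segment ℝ q₂ v₂ ⊆ closure (pchart f '' X₂) :=
        ((h𝒳.convex X₂ h₂).closure).segment_subset (subset_closure hq₂K₂) hv₂K₂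
      apply hsub
      rw [segment_eq_image']
      exact ⟨t, ⟨ht.1, le_of_lt ht.2⟩, rfl⟩
    · obtain ⟨hf1, hv0, hmem⟩ := (mem_chart_iff hdom.pc subset_closure).1 (hz₂K t ht)
      exact hmem
  have hζΩ : ∀ t ∈ Ico (0:ℝ) 1, ζ t ∈ Ω := fun t ht => hX₁Ω (hζX₁ t ht)
  have hξΩ : ∀ t ∈ Ico (0:ℝ) 1, ξ t ∈ Ω := fun t ht => hX₂Ω (hξX₂ t ht)
  -- distance bound along the rays
  set M : ℝ := (1/2) * Real.log ((1 + 1/lam') * (1 + 1/lam)) with hM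
  have hdistb : ∀ t ∈ Ico (0:ℝ) 1, hdist f Ω (ζ t) (ξ t) ≤ M := by
    intro t ht
    have hrw : hdist f Ω (ζ t) (ξ t) = affHilbertDist K (z₁ t) (z₂ t) := by
      unfold hdist
      rw [hζ, hξ]
      simp only []
      rw [pchart_mk_one f (hz₁0 t) (hfz₁ t), pchart_mk_one f (hz₂0 t) (hfz₂ t)]
    rw [hrw]
    apply affHilbertDist_le hKb hlam0 hlam'0
    · have hid : z₁ t + lam • (z₁ t - z₂ t)
          = (1 - t) • (q₁ + lam • (q₁ - q₂)) + t • (v₁ + lam • (v₁ - v₂)) := by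
        simp only [hz₁, hz₂]
        module
      rw [hid]
      exact hconvA (subset_closure hq₁') hv₁' (by linarith [ht.2] : (0:ℝ) ≤ 1 - t) ht.1
        (by ring)
    · have hid : z₂ t + lam' • (z₂ t - z₁ t)
          = (1 - t) • (q₂ + lam' • (q₂ - q₁)) + t • (v₂ + lam' • (v₂ - v₁)) := by
        simp only [hz₁, hz₂]
        module
      rw [hid]
      exact hconvA (subset_closure hq₂') hv₂' (by linarith [ht.2] : (0:ℝ) ≤ 1 - t) ht.1
        (by ring)
  -- isolation radius
  set rr : ℝ := max M 0 + 1 with hrr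
  have hrr0 : 0 < rr := by
    have := le_max_right M 0
    simp only [hrr]
    linarith
  obtain ⟨D, hD0, hDiam⟩ := hiso rr hrr0
  have hDiam12 := hDiam X₁ h₁ X₂ h₂ hne
  -- membership of the ray in both neighborhoods
  have hζN : ∀ t ∈ Ico (0:ℝ) 1,
      ζ t ∈ hnbhd f Ω X₁ rr ∩ hnbhd f Ω X₂ rr := by
    intro t ht
    constructor
    · refine ⟨hζΩ t ht, ζ t, hζX₁ t ht, ?_⟩
      unfold hdist affHilbertDist
      rw [if_pos rfl]
      exact hrr0
    · refine ⟨hζΩ t ht, ξ t, hξX₂ t ht, ?_⟩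
      calc hdist f Ω (ζ t) (ξ t) ≤ M := hdistb t ht
        _ ≤ max M 0 := le_max_left _ _
        _ < rr := by rw [hrr]; linarith
  -- pick a point far out on the ray
  set t₀ : ℝ := 1 - Real.exp (-(2*D + 2)) with ht₀
  have hexp1 : Real.exp (-(2*D + 2)) < 1 := by
    rw [Real.exp_lt_one_iff]
    linarith
  have hexp0 : 0 < Real.exp (-(2*D + 2)) := Real.exp_pos _
  have ht₀mem : t₀ ∈ Ico (0:ℝ) 1 := ⟨by rw [ht₀]; linarith, by rw [ht₀]; linarith⟩
  have ht₀pos : 0 < t₀ := by rw [ht₀]; linarith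
  -- lower bound on the distance
  obtain ⟨ε₀, hε₀0, hball₀⟩ := K_open_rel hdom hq₁K
  set τ : ℝ := ε₀ / (2 * (‖v₁ - q₁‖ + 1)) with hτ
  have hτ0 : 0 < τ := by positivity
  have hneg : q₁ + (-τ) • (v₁ - q₁) ∈ closure K := by
    apply subset_closure
    apply hball₀
    · simp only [map_add, map_smul, map_sub, hfq₁, hfv₁, smul_eq_mul]; ring
    · have : ‖q₁ + (-τ) • (v₁ - q₁) - q₁‖ = τ * ‖v₁ - q₁‖ := by
        rw [add_sub_cancel_left, norm_smul, Real.norm_eq_abs, abs_neg,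
          abs_of_pos hτ0]
      rw [this, hτ]
      rw [div_mul_eq_mul_div, div_lt_iff₀ (by positivity)]
      nlinarith [norm_nonneg (v₁ - q₁)]
  have hub : ∀ σ : ℝ, q₁ + σ • (v₁ - q₁) ∈ closure K → σ ≤ 1 := by
    intro σ hσ
    by_contra hσ1
    push_neg at hσ1
    apply hv₁notK
    have hmem := K_segment hdom hq₁K hσ (by positivity : (0:ℝ) ≤ 1/σ)
      (by rw [div_lt_one (by linarith : (0:ℝ) < σ)]; exact hσ1)
    have : q₁ + (1/σ) • (q₁ + σ • (v₁ - q₁) - q₁) = v₁ := by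
      rw [add_sub_cancel_left, smul_smul]
      rw [one_div, inv_mul_cancel₀ (by linarith : σ ≠ 0)]
      module
    rwa [this] at hmem
  have hmid : q₁ + ((1 + t₀)/2) • (v₁ - q₁) ∈ closure K := by
    apply subset_closure
    apply K_segment hdom hq₁K (closure_mono (Set.image_mono hX₁Ω) hv₁K₁)
    · linarith [ht₀mem.1]
    · linarith [ht₀mem.2]
  have hlow : (1/2) * Real.log (1/(1 - t₀)) ≤ hdist f Ω (ζ 0) (ζ t₀) := by
    have hrw : hdist f Ω (ζ 0) (ζ t₀) = affHilbertDist K q₁ (q₁ + t₀ • (v₁ - q₁)) := by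
      unfold hdist
      rw [hζ]
      simp only []
      rw [pchart_mk_one f (hz₁0 0) (hfz₁ 0), pchart_mk_one f (hz₁0 t₀) (hfz₁ t₀)]
      rw [hz₁]
      simp; rfl
    rw [hrw]
    exact affHilbertDist_ge hKb hv₁q₁ ht₀pos ht₀mem.2 hub hmid hτ0 hneg
  -- contradiction
  have hDle := hDiam12 (ζ 0) (hζN 0 ⟨le_refl 0, one_pos⟩) (ζ t₀) (hζN t₀ ht₀mem)
  have hval : (1/2) * Real.log (1/(1 - t₀)) = D + 1 := by
    have h1 : 1 - t₀ = Real.exp (-(2*D + 2)) := by rw [ht₀]; ring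
    rw [h1, one_div (Real.exp (-(2*D + 2))), Real.log_inv, Real.log_exp]
    ring
  rw [hval] at hlow
  linarith
end
end
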